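/- arXiv:1311.4348 — 8 statements merged into one kernel-verified Lean document; each statement's English description precedes it below -/
import Mathlib

section
/- For any partition τ = (n_1 ≥ n_2 ≥ ... ≥ n_k) of n, the polynomial P(q) = (q-1)(q^2-1)···(q^n-1) is divisible in ℤ[q] by the product (q^{n_1}-1)(q^{n_2}-1)···(q^{n_k}-1). -/
open Polynomial

/-- For any partition `τ` of `n`, the polynomial `P(q) = ∏_{i=1}^n (q^i - 1)` is divisible
in `ℤ[q]` by `∏_{i} (q^{n_i} - 1)`, the product over the parts `n_i` of `τ`. -/
theorem parts_prod_dvd_P (n : ℕ) (τ : Nat.Partition n) :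
    (Multiset.map (fun m => (X : ℤ[X]) ^ m - 1) τ.parts).prod ∣
      ∏ i ∈ Finset.range n, ((X : ℤ[X]) ^ (i + 1) - 1) := by
  have key : ∀ s : Multiset ℕ, (∀ m ∈ s, 0 < m) →
      (Multiset.map (fun m => (X : ℤ[X]) ^ m - 1) s).prod
        = ((s.bind fun m => m.divisors.val).map fun d => cyclotomic d ℤ).prod := by
    intro s hs
    rw [Multiset.map_bind, Multiset.prod_bind]
    congr 1
    exact Multiset.map_congr rfl fun m hm => by
      rw [← prod_cyclotomic_eq_X_pow_sub_one (hs m hm) ℤ]; rfl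
  have hR : ∏ i ∈ Finset.range n, ((X : ℤ[X]) ^ (i + 1) - 1)
      = (Multiset.map (fun m => (X : ℤ[X]) ^ m - 1) ((Finset.range n).val.map (· + 1))).prod := by
    rw [Multiset.map_map]; rfl
  rw [key τ.parts (fun m hm => τ.parts_pos hm), hR, key _ (by simp)]
  apply Multiset.prod_dvd_prod_of_le
  apply Multiset.map_le_map
  rw [Multiset.le_iff_count]
  intro d
  rcases Nat.eq_zero_or_pos d with rfl | hd
  · simp [Multiset.count_bind, Nat.mem_divisors]
  simp only [Multiset.count_bind]
  have hcount : ∀ x : ℕ, Multiset.count d x.divisors.val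
      = if d ∣ x ∧ x ≠ 0 then 1 else 0 := by
    intro x
    rcases em (d ∈ x.divisors) with h | h
    · rw [if_pos (Nat.mem_divisors.mp h)]
      exact Multiset.count_eq_one_of_mem x.divisors.nodup h
    · rw [if_neg (fun hc => h (Nat.mem_divisors.mpr hc)),
        Multiset.count_eq_zero_of_notMem h]
  -- RHS equals n / d
  have hRHS : ((((Finset.range n).val.map (· + 1))).map
      fun x => Multiset.count d x.divisors.val).sum = n / d := by
    rw [Multiset.map_map]
    show ∑ i ∈ Finset.range n, Multiset.count d ((i + 1).divisors.val) = n / d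
    have h2 : ∑ i ∈ Finset.range n, Multiset.count d ((i + 1).divisors.val)
        = ∑ i ∈ Finset.range n, (if d ∣ (i + 1) then 1 else 0) := by
      refine Finset.sum_congr rfl fun i _ => ?_
      rw [hcount]
      simp
    rw [h2, ← Finset.card_filter, ← Nat.Ioc_filter_dvd_card_eq_div n d]
    apply Finset.card_nbij' (fun i => i + 1) (fun j => j - 1)
    · intro i hi
      simp only [Finset.mem_coe, Finset.mem_filter, Finset.mem_range] at hi
      simp only [Finset.mem_coe, Finset.mem_filter, Finset.mem_Ioc]
      exact ⟨⟨Nat.succ_pos i, hi.1⟩, hi.2⟩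
    · intro j hj
      simp only [Finset.mem_coe, Finset.mem_filter, Finset.mem_Ioc] at hj
      simp only [Finset.mem_coe, Finset.mem_filter, Finset.mem_range]
      constructor
      · omega
      · have : j - 1 + 1 = j := by omega
        rw [this]; exact hj.2
    · intro i _; show i + 1 - 1 = i; omega
    · intro j hj
      simp only [Finset.mem_coe, Finset.mem_filter, Finset.mem_Ioc] at hj
      show j - 1 + 1 = j
      omega
  rw [hRHS]
  -- LHS bound
  rw [Nat.le_div_iff_mul_le hd]
  calc (Multiset.map (fun x => Multiset.count d x.divisors.val) τ.parts).sum * d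
      = (Multiset.map (fun x => Multiset.count d x.divisors.val * d) τ.parts).sum := by
        rw [← Multiset.sum_map_mul_right]
    _ ≤ (Multiset.map id τ.parts).sum := by
        apply Multiset.sum_map_le_sum_map
        intro x hx
        rw [hcount]
        by_cases h : d ∣ x ∧ x ≠ 0
        · rw [if_pos h, one_mul]
          exact Nat.le_of_dvd (τ.parts_pos hx) h.1
        · rw [if_neg h]; simp
    _ = n := by rw [Multiset.map_id]; exact τ.parts_sum
end

section
/- For every n ≥ 1, the rank over ℚ of the matrix M(n) = (c(τ,y))_{τ⊢n, y∈ℕ}, whose rows are indexed by partitions τ of n and columns by non-negative integers y, with entries c(τ,y) = ∏_{i=1}^k (q^{n_i·y} + q^{n_i(y-1)} + ... + 1) ∈ ℚ[q], is at most (n^3 + n + 2)/2. -/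
open Polynomial

set_option maxHeartbeats 1600000
set_option synthInstance.maxHeartbeats 400000

noncomputable section RankMAux

def gf (y m : ℕ) : ℚ[X] := ∑ j ∈ Finset.range (y + 1), (X : ℚ[X]) ^ (m * j)

lemma natDegree_gf_le (y m : ℕ) : (gf y m).natDegree ≤ m * y := by
  apply natDegree_sum_le_of_forall_le
  intro j hj
  rw [natDegree_X_pow]
  exact Nat.mul_le_mul_left m (Nat.lt_succ_iff.mp (Finset.mem_range.mp hj))

lemma reflect_sum (N : ℕ) (s : Finset ℕ) (f : ℕ → ℚ[X]) :
    reflect N (∑ j ∈ s, f j) = ∑ j ∈ s, reflect N (f j) := by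
  classical
  induction s using Finset.induction with
  | empty => simp [reflect_zero]
  | insert a s h ih => rw [Finset.sum_insert h, Finset.sum_insert h, reflect_add, ih]

lemma reflect_gf (y m : ℕ) : reflect (m * y) (gf y m) = gf y m := by
  unfold gf
  rw [reflect_sum]
  have h1 : ∀ j ∈ Finset.range (y+1), reflect (m*y) ((X:ℚ[X])^(m*j)) = X^(m*(y-j)) := by
    intro j hj
    have hj' := Nat.lt_succ_iff.mp (Finset.mem_range.mp hj)
    rw [reflect_monomial, revAt_le (Nat.mul_le_mul_left m hj')]
    rw [Nat.mul_sub]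
  rw [Finset.sum_congr rfl h1]
  rw [← Finset.sum_range_reflect (fun j => (X:ℚ[X])^(m*j)) (y+1)]
  apply Finset.sum_congr rfl
  intro j hj
  have hj' := Nat.lt_succ_iff.mp (Finset.mem_range.mp hj)
  congr 1

lemma natDegree_prodrow_le (P : Multiset ℕ) (y : ℕ) :
    ((P.map (gf y)).prod).natDegree ≤ P.sum * y := by
  refine (natDegree_multiset_prod_le _).trans ?_
  rw [Multiset.map_map]
  induction P using Multiset.induction with
  | empty => simp
  | cons a P ih =>
      simp only [Multiset.map_cons, Multiset.sum_cons, Multiset.prod_cons, Function.comp_apply]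
      rw [Nat.add_mul]
      exact Nat.add_le_add (natDegree_gf_le y a) ih

lemma reflect_prodrow (P : Multiset ℕ) (y : ℕ) :
    reflect (P.sum * y) ((P.map (gf y)).prod) = (P.map (gf y)).prod := by
  induction P using Multiset.induction with
  | empty =>
      simp only [Multiset.map_zero, Multiset.prod_zero, Multiset.sum_zero, Nat.zero_mul]
      rw [reflect_one 0, pow_zero]
  | cons a P ih =>
      simp only [Multiset.map_cons, Multiset.prod_cons, Multiset.sum_cons, Nat.add_mul]
      rw [reflect_mul _ _ (natDegree_gf_le y a) (natDegree_prodrow_le P y), reflect_gf, ih]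

abbrev F := RatFunc ℚ
abbrev ξ : F := algebraMap ℚ[X] F X

/-- exponential sequences -/
def g (s : ℕ) : ℕ → F := fun y => ξ ^ (s * y)

def V (k : ℕ) : Submodule F (ℕ → F) := Submodule.span F (g '' {s | s ≤ k})

lemma xi_pow_ne_one {a : ℕ} (ha : 0 < a) : ξ ^ a ≠ 1 := by
  rw [← map_pow, ← map_one (algebraMap ℚ[X] F)]
  intro h
  have h2 := RatFunc.algebraMap_injective ℚ h
  have : (X^a : ℚ[X]).natDegree = 0 := by rw [h2]; simp
  simp [natDegree_X_pow] at this; omega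

lemma step1 (P : Multiset ℕ) (hP : ∀ m ∈ P, 0 < m) :
    (fun y => ((P.map (fun m => ∑ j ∈ Finset.range (y + 1), (ξ : F) ^ (m * j))).prod)) ∈ V P.sum := by
  induction P using Multiset.induction with
  | empty =>
      simp only [Multiset.map_zero, Multiset.prod_zero]
      have : (fun _ : ℕ => (1:F)) = g 0 := by funext y; simp [g]
      rw [this]
      exact Submodule.subset_span ⟨0, by simp, rfl⟩
  | cons a P ih =>
      have ha : 0 < a := hP a (Multiset.mem_cons_self a P)
      have hP' : ∀ m ∈ P, 0 < m := fun m hm => hP m (Multiset.mem_cons_of_mem hm)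
      have hrest := ih hP'
      set geom : ℕ → F := fun y => ∑ j ∈ Finset.range (y + 1), (ξ:F) ^ (a * j) with hgeom
      have hfun : (fun y => ((((a ::ₘ P)).map (fun m => ∑ j ∈ Finset.range (y + 1), (ξ : F) ^ (m * j))).prod))
          = LinearMap.mulLeft F geom (fun y => ((P.map (fun m => ∑ j ∈ Finset.range (y + 1), (ξ : F) ^ (m * j))).prod)) := by
        funext y
        simp [Multiset.map_cons, Multiset.prod_cons, LinearMap.mulLeft_apply, hgeom]
      rw [hfun, Multiset.sum_cons]
      have hmap : Submodule.map (LinearMap.mulLeft F geom) (V P.sum) ≤ V (a + P.sum) := by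
        rw [V, Submodule.map_span, Submodule.span_le]
        rintro _ ⟨_, ⟨s, hs, rfl⟩, rfl⟩
        have hne : (ξ:F)^a - 1 ≠ 0 := sub_ne_zero.mpr (xi_pow_ne_one ha)
        have key : LinearMap.mulLeft F geom (g s)
            = (((ξ:F)^a - 1)⁻¹ * (ξ:F)^a) • g (a + s) - ((ξ:F)^a - 1)⁻¹ • g s := by
          funext y
          have hgs : geom y = ((ξ:F)^(a*(y+1)) - 1) / ((ξ:F)^a - 1) := by
            rw [hgeom]
            have := geom_sum_eq (xi_pow_ne_one ha) (y+1)
            simp only [← pow_mul] at this ⊢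
            rw [show ∀ j, a * j = j * a from fun j => Nat.mul_comm a j] at *
            simpa [mul_comm] using this
          simp only [LinearMap.mulLeft_apply, Pi.smul_apply, Pi.sub_apply, Pi.mul_apply,
            smul_eq_mul, g]
          rw [hgs, show a*(y+1) = a + a*y by ring, show (a+s)*y = a*y + s*y by ring,
            pow_add, pow_add]
          field_simp
        rw [key]
        exact sub_mem (Submodule.smul_mem _ _ (Submodule.subset_span ⟨a+s, by simpa using Nat.add_le_add_left hs a, rfl⟩))
          (Submodule.smul_mem _ _ (Submodule.subset_span ⟨s, by simp only [Set.mem_setOf_eq] at hs ⊢; omega, rfl⟩))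
      exact hmap ⟨_, hrest, rfl⟩

lemma xi_inj : Function.Injective (fun s : ℕ => (ξ:F) ^ s) := by
  intro s t h
  simp only [← map_pow] at h
  have h2 := RatFunc.algebraMap_injective ℚ h
  have := congrArg natDegree h2
  simpa [natDegree_X_pow] using this

def Ψ (n : ℕ) : (Fin (n+1) → F) →ₗ[F] (ℕ → F) :=
  ∑ s : Fin (n+1), LinearMap.smulRight (LinearMap.proj s) (g s)

lemma Psi_apply (n : ℕ) (A : Fin (n+1) → F) (y : ℕ) :
    Ψ n A y = ∑ s : Fin (n+1), A s * ξ ^ ((s:ℕ) * y) := by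
  simp [Ψ, g, LinearMap.smulRight_apply]

lemma V_le_range (n : ℕ) : V n ≤ LinearMap.range (Ψ n) := by
  rw [V, Submodule.span_le]
  rintro _ ⟨s, hs, rfl⟩
  simp only [Set.mem_setOf_eq] at hs
  refine ⟨Pi.single ⟨s, Nat.lt_succ_of_le hs⟩ 1, ?_⟩
  funext y
  rw [Psi_apply]
  rw [Finset.sum_eq_single (⟨s, Nat.lt_succ_of_le hs⟩ : Fin (n+1))]
  · simp [g]
  · intro b _ hb; simp [Pi.single_apply, hb]
  · simp

lemma step2 (n : ℕ) (f : ℕ → F) (hf : f ∈ V n) (h0 : ∀ y : ℕ, y ≤ n → f y = 0) : f = 0 := by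
  obtain ⟨A, rfl⟩ := V_le_range n hf
  set Q : Polynomial F := ∑ s : Fin (n+1), Polynomial.C (A s) * Polynomial.X ^ (s:ℕ) with hQ
  have heval : ∀ y : ℕ, y ≤ n → Q.eval ((ξ:F) ^ y) = 0 := by
    intro y hy
    have := h0 y hy
    rw [Psi_apply] at this
    rw [hQ]
    simp only [eval_finset_sum, eval_mul, eval_C, eval_pow, eval_X]
    rw [← this]
    congr 1; funext s; rw [← pow_mul, Nat.mul_comm]
  have hQ0 : Q = 0 := by
    apply eq_zero_of_natDegree_lt_card_of_eval_eq_zero Q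
      (f := fun i : Fin (n+1) => (ξ:F) ^ (i:ℕ))
      (fun i j h => Fin.ext (xi_inj h))
      (fun i => heval i (Nat.lt_succ_iff.mp i.2))
    calc Q.natDegree ≤ n := by
          apply natDegree_sum_le_of_forall_le
          intro s _
          exact (natDegree_C_mul_X_pow_le _ _).trans (Nat.lt_succ_iff.mp s.2)
      _ < Fintype.card (Fin (n+1)) := by simp
  have hA : ∀ s : Fin (n+1), A s = 0 := by
    intro s
    have := congrArg (fun p => Polynomial.coeff p (s:ℕ)) hQ0
    simp only [hQ, finset_sum_coeff, coeff_C_mul, coeff_X_pow, coeff_zero] at this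
    rw [Finset.sum_eq_single s] at this
    · simpa using this
    · intro b _ hb
      have : ((s:ℕ) = (b:ℕ)) = False := by simp [Fin.val_eq_val, Ne.symm hb ]
      simp [this]
    · simp
  have : A = 0 := funext hA
  rw [this, map_zero]

lemma mem_pal_span (N : ℕ) (c : ℚ[X]) (hdeg : c.natDegree ≤ N) (href : reflect N c = c) :
    c ∈ Submodule.span ℚ {p : ℚ[X] | ∃ t, t ≤ N/2 ∧ p = X ^ t + X ^ (N - t)} := by
  have hsym : ∀ t, t ≤ N → c.coeff (N - t) = c.coeff t := by
    intro t ht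
    conv_rhs => rw [← href]
    rw [coeff_reflect, revAt_le ht]
  have hgen : ∀ t, t ≤ N → (X ^ t + X ^ (N - t) : ℚ[X]) ∈
      Submodule.span ℚ {p : ℚ[X] | ∃ t, t ≤ N/2 ∧ p = X ^ t + X ^ (N - t)} := by
    intro t ht
    by_cases h : t ≤ N/2
    · exact Submodule.subset_span ⟨t, h, rfl⟩
    · have h1 : N - t ≤ N/2 := by omega
      have h2 : N - (N - t) = t := by omega
      refine Submodule.subset_span ⟨N - t, h1, ?_⟩
      rw [h2, add_comm]
  have hkey : c = (2:ℚ)⁻¹ • ∑ t ∈ Finset.range (N+1), c.coeff t • ((X:ℚ[X]) ^ t + X ^ (N - t)) := by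
    have e1 : ∑ t ∈ Finset.range (N+1), c.coeff t • ((X:ℚ[X]) ^ t)  = c := by
      conv_rhs => rw [as_sum_range' c (N+1) (Nat.lt_succ_of_le hdeg)]
      apply Finset.sum_congr rfl
      intro t _
      rw [Polynomial.smul_eq_C_mul, C_mul_X_pow_eq_monomial]
    have e2 : ∑ t ∈ Finset.range (N+1), c.coeff t • ((X:ℚ[X]) ^ (N - t)) = c := by
      rw [← Finset.sum_range_reflect (fun t => c.coeff t • ((X:ℚ[X]) ^ (N - t))) (N+1)]
      refine Eq.trans (Finset.sum_congr rfl ?_) e1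
      intro t ht
      have ht' := Nat.lt_succ_iff.mp (Finset.mem_range.mp ht)
      have h1 : N + 1 - 1 - t = N - t := by omega
      have h2 : N - (N - t) = t := by omega
      simp only [h1, h2]
      rw [hsym t ht']
    have e3 : ∑ t ∈ Finset.range (N+1), c.coeff t • ((X:ℚ[X]) ^ t + X ^ (N - t)) = (2:ℚ) • c := by
      simp only [smul_add]
      rw [Finset.sum_add_distrib, e1, e2, two_smul]
    rw [e3, smul_smul]
    norm_num
  rw [hkey]
  refine Submodule.smul_mem _ _ (Submodule.sum_mem _ ?_)
  intro t ht
  exact Submodule.smul_mem _ _ (hgen t (Nat.lt_succ_iff.mp (Finset.mem_range.mp ht)))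

lemma nat_bound (n : ℕ) (hn : 1 ≤ n) :
    ∑ y ∈ Finset.range (n+1), (n*y/2 + 1) ≤ (n^3 + n + 2)/2 := by
  rw [Nat.le_div_iff_mul_le (by norm_num)]
  rcases Nat.lt_or_ge n 2 with h2 | h2
  · interval_cases n
    decide
  · have h1 : ∀ y, (n*y/2 + 1)*2 ≤ n*y + 2 := by
      intro y
      have := Nat.div_mul_le_self (n*y) 2
      omega
    have hS : (∑ y ∈ Finset.range (n+1), y) * 2 = (n+1)*n := Finset.sum_range_id_mul_two (n+1)
    calc (∑ y ∈ Finset.range (n+1), (n*y/2 + 1)) * 2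
        = ∑ y ∈ Finset.range (n+1), (n*y/2 + 1)*2 := by rw [Finset.sum_mul]
      _ ≤ ∑ y ∈ Finset.range (n+1), (n*y + 2) := Finset.sum_le_sum (fun y _ => h1 y)
      _ = n * (∑ y ∈ Finset.range (n+1), y) + 2*(n+1) := by
          rw [Finset.sum_add_distrib, ← Finset.mul_sum]
          simp [Finset.sum_const, Finset.card_range, Nat.mul_comm]
      _ ≤ n^3 + n + 2 := by
          set S := ∑ y ∈ Finset.range (n+1), y with hSdef
          have hcube : n^2 + 2*n ≤ n^3 := by nlinarith
          nlinarith [hS, hcube]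


lemma isScalarTower_of_smul_assoc' {R S M : Type*} {_ : SMul R S} {_ : SMul S M} {_ : SMul R M}
    (h : ∀ (x : R) (y : S) (z : M), (x • y) • z = x • y • z) : IsScalarTower R S M := ⟨h⟩

theorem rank_M_le' (n : ℕ) (hn : 1 ≤ n) :
    Module.rank ℚ
      (Submodule.span ℚ (Set.range (fun τ : Nat.Partition n =>
        (fun y : ℕ =>
          (Multiset.map (fun m => ∑ j ∈ Finset.range (y + 1), (X : ℚ[X]) ^ (m * j))
            τ.parts).prod : ℕ → ℚ[X]))))
      ≤ ((n ^ 3 + n + 2) / 2 : ℕ) := by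
  classical
  set rows : Nat.Partition n → (ℕ → ℚ[X]) := fun τ =>
    (fun y : ℕ =>
      (Multiset.map (fun m => ∑ j ∈ Finset.range (y + 1), (X : ℚ[X]) ^ (m * j))
        τ.parts).prod) with hrows
  set S : Set (ℕ → ℚ[X]) := Set.range rows with hS
  set ι : ℚ[X] →ₗ[ℚ] F := (Algebra.linearMap ℚ[X] F).restrictScalars ℚ with hι
  set Φ : (ℕ → ℚ[X]) →ₗ[ℚ] (ℕ → F) := LinearMap.compLeft ι ℕ with hΦ
  have hΦinj : Function.Injective Φ := by
    intro f g h
    funext y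
    exact RatFunc.algebraMap_injective ℚ (congrFun h y)
  set ev : (ℕ → F) →ₗ[ℚ] (Fin (n+1) → F) :=
    LinearMap.funLeft ℚ F (fun i : Fin (n+1) => (i : ℕ)) with hev
  -- image of a row under Φ
  have hrow_eq : ∀ τ : Nat.Partition n, Φ (rows τ) =
      fun y => ((τ.parts.map (fun m => ∑ j ∈ Finset.range (y + 1), (ξ : F) ^ (m * j))).prod) := by
    intro τ
    funext y
    show algebraMap ℚ[X] F ((τ.parts.map (gf y)).prod) = _
    rw [map_multiset_prod, Multiset.map_map]
    congr 1
    apply Multiset.map_congr rfl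
    intro m _
    simp [gf, map_sum, map_pow]
  set M₁ : Submodule ℚ (ℕ → F) := Submodule.map Φ (Submodule.span ℚ S) with hM₁def
  have h1 : Module.rank ℚ (Submodule.span ℚ S) = Module.rank ℚ M₁ :=
    LinearEquiv.rank_eq (Submodule.equivMapOfInjective Φ hΦinj _)
  have hM₁span : M₁ = Submodule.span ℚ (Φ '' S) := Submodule.map_span Φ S
  have hsub : M₁ ≤ @Submodule.restrictScalars ℚ F (ℕ → F) _ _ _ _ _ _ (by
      refine isScalarTower_of_smul_assoc' ?_
      intro x y z
      funext i
      simp only [Pi.smul_apply, smul_eq_mul]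
      rw [RatFunc.smul_eq_C_smul, Algebra.smul_def, Rat.smul_def, RatFunc.algebraMap_C,
        ← map_ratCast (RatFunc.C (K := ℚ)) x, Rat.cast_id, mul_assoc]) (V n) := by
    rw [hM₁span, Submodule.span_le]
    rintro _ ⟨_, ⟨τ, rfl⟩, rfl⟩
    rw [hrow_eq τ]
    have := step1 τ.parts (fun m hm => τ.parts_pos hm)
    rwa [τ.parts_sum] at this
  set ψ : M₁ →ₗ[ℚ] (Fin (n+1) → F) := ev.comp M₁.subtype with hψ
  have hψinj : Function.Injective ψ := by
    rw [← LinearMap.ker_eq_bot, LinearMap.ker_eq_bot']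
    intro x hx
    have hx1 : (x : ℕ → F) ∈ V n := hsub x.2
    have hx0 : ∀ y : ℕ, y ≤ n → (x : ℕ → F) y = 0 := by
      intro y hy
      have := congrFun hx ⟨y, Nat.lt_succ_of_le hy⟩
      exact this
    have := step2 n _ hx1 hx0
    exact Subtype.ext this
  have h2 : Module.rank ℚ M₁ = Module.rank ℚ (LinearMap.range ψ) :=
    LinearEquiv.rank_eq (LinearEquiv.ofInjective ψ hψinj)
  have hrange : LinearMap.range ψ = Submodule.map ev M₁ := by
    rw [hψ, LinearMap.range_comp, Submodule.range_subtype]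
  set fgen : ((i : Fin (n+1)) × Fin (n*(i:ℕ)/2 + 1)) → (Fin (n+1) → F) := fun p =>
    Pi.single p.1 ((ξ:F) ^ (p.2 : ℕ) + ξ ^ (n*(p.1:ℕ) - (p.2:ℕ))) with hfgen
  have h4 : Submodule.map ev M₁ ≤ Submodule.span ℚ (Set.range fgen) := by
    rw [hM₁span, Submodule.map_span, Submodule.span_le]
    rintro _ ⟨_, ⟨_, ⟨τ, rfl⟩, rfl⟩, rfl⟩
    set w : Fin (n+1) → F := ev (Φ (rows τ)) with hw
    have hwi : ∀ i : Fin (n+1), w i = ι (rows τ (i : ℕ)) := fun i => rfl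
    have hwsum : w = ∑ i : Fin (n+1), Pi.single i (w i) := (Finset.univ_sum_single w).symm
    rw [hwsum]
    apply Submodule.sum_mem
    intro i _
    -- row value is palindromic
    have hdeg : (rows τ (i:ℕ)).natDegree ≤ n * (i:ℕ) := by
      have := natDegree_prodrow_le τ.parts (i:ℕ)
      rwa [τ.parts_sum] at this
    have href : reflect (n * (i:ℕ)) (rows τ (i:ℕ)) = rows τ (i:ℕ) := by
      have := reflect_prodrow τ.parts (i:ℕ)
      rwa [τ.parts_sum] at this
    have hc : rows τ (i:ℕ) ∈ Submodule.span ℚ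
        {p : ℚ[X] | ∃ t, t ≤ n*(i:ℕ)/2 ∧ p = X ^ t + X ^ (n*(i:ℕ) - t)} :=
      mem_pal_span (n*(i:ℕ)) _ hdeg href
    set Li : ℚ[X] →ₗ[ℚ] (Fin (n+1) → F) :=
      (LinearMap.single ℚ (fun _ : Fin (n+1) => F) i).comp ι with hLi
    have hLiw : Pi.single i (w i) = Li (rows τ (i:ℕ)) := by
      rw [hwi i]; rfl
    rw [hLiw]
    have hmem := Submodule.apply_mem_span_image_of_mem_span Li hc
    refine Submodule.span_mono ?_ hmem
    rintro _ ⟨p, ⟨t, ht, rfl⟩, rfl⟩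
    refine ⟨⟨i, ⟨t, by omega⟩⟩, ?_⟩
    show Pi.single i ((ξ:F)^t + ξ^(n*(i:ℕ) - t)) = Li (X ^ t + X ^ (n*(i:ℕ) - t))
    rw [hLi, LinearMap.comp_apply, hι]
    simp [map_add, map_pow, Pi.single_add]
  have h5 : Module.rank ℚ (Submodule.span ℚ (Set.range fgen)) ≤
      ((∑ y ∈ Finset.range (n+1), (n*y/2 + 1) : ℕ) : Cardinal) := by
    refine (rank_span_le _).trans ?_
    refine Cardinal.mk_range_le.trans ?_
    rw [Cardinal.mk_fintype]
    norm_cast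
    rw [Fintype.card_sigma]
    simp only [Fintype.card_fin]
    rw [← Fin.sum_univ_eq_sum_range (fun y => n*y/2 + 1) (n+1)]
  calc Module.rank ℚ (Submodule.span ℚ S)
      = Module.rank ℚ (LinearMap.range ψ) := h1.trans h2
    _ ≤ Module.rank ℚ (Submodule.span ℚ (Set.range fgen)) := by
        rw [hrange]; exact Submodule.rank_mono h4
    _ ≤ ((∑ y ∈ Finset.range (n+1), (n*y/2 + 1) : ℕ) : Cardinal) := h5
    _ ≤ ((n ^ 3 + n + 2) / 2 : ℕ) := by
        exact_mod_cast Nat.cast_le.mpr (nat_bound n hn)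

end RankMAux

/-- For every `n ≥ 1`, the rank over ℚ of the matrix `M(n) = (c(τ,y))` whose rows are indexed
by partitions `τ ⊢ n` and columns by `y ∈ ℕ`, with entries
`c(τ,y) = ∏_i (1 + q^{n_i} + q^{2n_i} + ⋯ + q^{n_i y}) ∈ ℚ[q]`, is at most `(n^3+n+2)/2`.
Rows are viewed as elements of the ℚ-vector space of functions `ℕ → ℚ[q]`, and the rank is
the dimension of the span of the set of rows. -/
theorem rank_M_le (n : ℕ) (hn : 1 ≤ n) :
    Module.rank ℚ
      (Submodule.span ℚ (Set.range (fun τ : Nat.Partition n =>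
        (fun y : ℕ =>
          (Multiset.map (fun m => ∑ j ∈ Finset.range (y + 1), (X : ℚ[X]) ^ (m * j))
            τ.parts).prod : ℕ → ℚ[X]))))
      ≤ ((n ^ 3 + n + 2) / 2 : ℕ) :=
  rank_M_le' n hn
end

section
/- If m > (n^3+n+2)/2 and τ(1), ..., τ(m) are m distinct partitions of n, then there exist rational numbers α_1,...,α_m, not all zero, such that for every non-negative integer y, the polynomial ∑_{i=1}^m α_i · c(τ(i), y) is the zero polynomial in ℚ[q]. -/
open Polynomial Finset

namespace PartDep

noncomputable def P (y : ℕ) : ℕ → ℚ[X] := fun p => ∑ j ∈ Finset.range (y+1), (X:ℚ[X])^(p*j)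

noncomputable def c (s : Multiset ℕ) (y : ℕ) : ℚ[X] := (s.map (P y)).prod

lemma P_mul (y p : ℕ) : P y p * ((X:ℚ[X])^p - 1) = X^(p*(y+1)) - 1 := by
  have h : P y p = ∑ j ∈ Finset.range (y+1), ((X:ℚ[X])^p)^j := by
    unfold P; exact Finset.sum_congr rfl fun j _ => (pow_mul X p j)
  rw [h, geom_sum_mul, ← pow_mul]

lemma lemA (s : Multiset ℕ) (y : ℕ) :
    c s y * (s.map fun p => (X:ℚ[X])^p - 1).prod
      = (s.map fun p => (X:ℚ[X])^(p*(y+1)) - 1).prod := by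
  rw [c, ← Multiset.prod_map_mul]
  exact congrArg _ (Multiset.map_congr rfl fun p _ => P_mul y p)

lemma prod_map_pow' (x : ℚ[X]) (s : Multiset ℕ) : (s.map fun p => x^p).prod = x ^ s.sum := by
  induction s using Multiset.induction with
  | empty => simp
  | cons a s ih => simp [Multiset.prod_cons, ih, pow_add]

lemma lemB (s : Multiset ℕ) (t : ℕ) :
    (s.map fun p => (X:ℚ[X])^(p*t) - 1).prod
      = ((s.antidiagonal).map fun uv =>
          ((-1:ℚ[X])^(Multiset.card uv.2)) * X^(uv.1.sum * t)).sum := by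
  have h : (s.map fun p => (X:ℚ[X])^(p*t) - 1)
      = s.map fun p => ((fun q => (X:ℚ[X])^(q*t)) p + (fun _ => (-1:ℚ[X])) p) := by
    apply Multiset.map_congr rfl; intro p _; simp [sub_eq_add_neg]
  rw [h, Multiset.prod_map_add]
  apply congrArg
  apply Multiset.map_congr rfl
  intro uv _
  have h1 : (uv.1.map fun p => (X:ℚ[X])^(p*t)).prod = X^(uv.1.sum * t) := by
    have : (uv.1.map fun p => (X:ℚ[X])^(p*t)) = uv.1.map fun p => ((X:ℚ[X])^t)^p := by
      apply Multiset.map_congr rfl; intro p _; rw [← pow_mul, mul_comm]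
    rw [this, prod_map_pow', ← pow_mul, mul_comm]
  have h2 : (uv.2.map fun _ => (-1:ℚ[X])).prod = (-1:ℚ[X])^(Multiset.card uv.2) := by
    simp [Multiset.map_const', Multiset.prod_replicate]
  rw [h1, h2, mul_comm]

noncomputable def Q (n : ℕ) : Polynomial ℚ[X] :=
  ∏ a ∈ Finset.range (n+1), (Polynomial.X - Polynomial.C ((X:ℚ[X])^a))

lemma Q_monic (n : ℕ) : (Q n).Monic :=
  monic_prod_of_monic _ _ fun a _ => monic_X_sub_C _

lemma Q_natDegree (n : ℕ) : (Q n).natDegree = n + 1 := by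
  rw [Q, natDegree_prod _ _ fun a _ => X_sub_C_ne_zero _,
    Finset.sum_congr rfl fun a _ => natDegree_X_sub_C ((X:ℚ[X])^a)]
  simp

lemma Q_coeff_top (n : ℕ) : (Q n).coeff (n+1) = 1 := by
  have := (Q_monic n).coeff_natDegree
  rwa [Q_natDegree] at this

lemma Q_eval_pow (n a : ℕ) (ha : a ≤ n) : (Q n).eval ((X:ℚ[X])^a) = 0 := by
  rw [Q, eval_prod]
  exact Finset.prod_eq_zero (Finset.mem_range.2 (Nat.lt_succ_of_le ha)) (by simp)

lemma sum_swap_ms {α β : Type*} (sfin : Finset β) (M : Multiset α) (F : β → α → ℚ[X]) :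
    ∑ j ∈ sfin, (M.map (F j)).sum = (M.map fun p => ∑ j ∈ sfin, F j p).sum := by
  classical
  induction sfin using Finset.induction with
  | empty => simp
  | insert _ _ ha ih =>
    rw [Finset.sum_insert ha, ih, ← Multiset.sum_map_add]
    congr 1
    apply Multiset.map_congr rfl
    intro p _
    rw [Finset.sum_insert ha]

lemma B_ne_zero (s : Multiset ℕ) (hs : ∀ p ∈ s, 0 < p) :
    (s.map fun p => (X:ℚ[X])^p - 1).prod ≠ 0 := by
  apply Multiset.prod_ne_zero
  intro h0
  obtain ⟨p, hp, hp0⟩ := Multiset.mem_map.mp h0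
  have h1 : ((X:ℚ[X])^p - 1).eval 0 = -1 := by
    simp [zero_pow (hs p hp).ne']
  rw [hp0] at h1
  simp at h1

lemma rec_core (n : ℕ) (s : Multiset ℕ) (hs : ∀ p ∈ s, 0 < p) (hsum : s.sum = n) (y : ℕ) :
    ∑ j ∈ Finset.range (n+2), (Q n).coeff j * c s (y+j) = 0 := by
  set B := (s.map fun p => (X:ℚ[X])^p - 1).prod with hB
  have hBne : B ≠ 0 := B_ne_zero s hs
  have key : (∑ j ∈ Finset.range (n+2), (Q n).coeff j * c s (y+j)) * B = 0 := by
    rw [Finset.sum_mul]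
    have step : ∀ j, ((Q n).coeff j * c s (y+j)) * B
        = (s.antidiagonal.map fun uv =>
            ((-1:ℚ[X])^(Multiset.card uv.2) * (X:ℚ[X])^(uv.1.sum*(y+1)))
              * ((Q n).coeff j * ((X:ℚ[X])^uv.1.sum)^j)).sum := by
      intro j
      rw [mul_assoc, lemA, lemB, ← Multiset.sum_map_mul_left]
      apply congrArg
      apply Multiset.map_congr rfl
      intro uv _
      have hexp : uv.1.sum * (y + j + 1) = uv.1.sum * (y+1) + uv.1.sum * j := by ring
      have : (X:ℚ[X])^(uv.1.sum * (y+j+1)) = (X:ℚ[X])^(uv.1.sum*(y+1)) * ((X:ℚ[X])^uv.1.sum)^j := by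
        rw [hexp, pow_add, ← pow_mul]
      calc (Q n).coeff j * ((-1:ℚ[X])^(Multiset.card uv.2) * X^(uv.1.sum * (y+j+1)))
          = (Q n).coeff j * ((-1:ℚ[X])^(Multiset.card uv.2)
              * ((X:ℚ[X])^(uv.1.sum*(y+1)) * ((X:ℚ[X])^uv.1.sum)^j)) := by rw [this]
        _ = ((-1:ℚ[X])^(Multiset.card uv.2) * (X:ℚ[X])^(uv.1.sum*(y+1)))
              * ((Q n).coeff j * ((X:ℚ[X])^uv.1.sum)^j) := by ring
    rw [Finset.sum_congr rfl fun j _ => step j, sum_swap_ms]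
    have zero_term : ∀ uv ∈ s.antidiagonal,
        (∑ j ∈ Finset.range (n+2),
          ((-1:ℚ[X])^(Multiset.card uv.2) * (X:ℚ[X])^(uv.1.sum*(y+1)))
            * ((Q n).coeff j * ((X:ℚ[X])^uv.1.sum)^j)) = 0 := by
      intro uv huv
      rw [← Finset.mul_sum]
      have hle : uv.1.sum ≤ n := by
        have h' : uv.1 + uv.2 = s := (Multiset.mem_antidiagonal).mp huv
        have : uv.1.sum + uv.2.sum = n := by rw [← Multiset.sum_add, h', hsum]
        omega
      have hev : ∑ j ∈ Finset.range (n+2), (Q n).coeff j * ((X:ℚ[X])^uv.1.sum)^j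
          = (Q n).eval ((X:ℚ[X])^uv.1.sum) :=
        (eval_eq_sum_range' (n := n+2) (by rw [Q_natDegree]; omega) _).symm
      rw [hev, Q_eval_pow n _ hle, mul_zero]
    have : (s.antidiagonal.map fun uv => (∑ j ∈ Finset.range (n+2),
          ((-1:ℚ[X])^(Multiset.card uv.2) * (X:ℚ[X])^(uv.1.sum*(y+1)))
            * ((Q n).coeff j * ((X:ℚ[X])^uv.1.sum)^j))) 
        = s.antidiagonal.map fun _ => (0:ℚ[X]) :=
      Multiset.map_congr rfl zero_term
    rw [this]
    simp
  rcases mul_eq_zero.mp key with h | h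
  · exact h
  · exact absurd h hBne

lemma natDegree_P_le (y p : ℕ) : (P y p).natDegree ≤ p * y := by
  unfold P
  apply natDegree_sum_le_of_forall_le
  intro j hj
  rw [natDegree_X_pow]
  exact Nat.mul_le_mul_left p (Nat.lt_succ_iff.mp (Finset.mem_range.mp hj))

lemma natDegree_c_le (s : Multiset ℕ) (y : ℕ) : (c s y).natDegree ≤ s.sum * y := by
  induction s using Multiset.induction with
  | empty => simp [c]
  | cons p s ih =>
    have : c (p ::ₘ s) y = P y p * c s y := by
      rw [c, Multiset.map_cons, Multiset.prod_cons]; rfl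
    rw [this, Multiset.sum_cons, add_mul]
    exact natDegree_mul_le.trans (add_le_add (natDegree_P_le y p) ih)

lemma reflect_sum {ι : Type*} (N : ℕ) (s : Finset ι) (f : ι → ℚ[X]) :
    reflect N (∑ i ∈ s, f i) = ∑ i ∈ s, reflect N (f i) := by
  classical
  induction s using Finset.induction with
  | empty => simp
  | insert _ _ ha ih => rw [Finset.sum_insert ha, Finset.sum_insert ha, reflect_add, ih]

lemma reflect_P (y p : ℕ) : reflect (p*y) (P y p) = P y p := by
  unfold P
  rw [reflect_sum]
  have h1 : ∀ j ∈ Finset.range (y+1), reflect (p*y) ((X:ℚ[X])^(p*j)) = X^(p*(y-j)) := by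
    intro j hj
    have hj' : j ≤ y := Nat.lt_succ_iff.mp (Finset.mem_range.mp hj)
    rw [reflect_monomial, revAt_le (Nat.mul_le_mul_left p hj')]
    rw [Nat.mul_sub]
  rw [Finset.sum_congr rfl h1]
  have := Finset.sum_range_reflect (fun j => (X:ℚ[X])^(p*j)) (y+1)
  simpa using this

lemma reflect_c (s : Multiset ℕ) (y : ℕ) : reflect (s.sum*y) (c s y) = c s y := by
  induction s using Multiset.induction with
  | empty => simp [c]
  | cons p s ih =>
    have hc : c (p ::ₘ s) y = P y p * c s y := by
      rw [c, Multiset.map_cons, Multiset.prod_cons]; rfl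
    rw [hc, Multiset.sum_cons, add_mul,
      reflect_mul _ _ (natDegree_P_le y p) (natDegree_c_le s y), reflect_P, ih]

lemma coeff_sym (s : Multiset ℕ) (y b : ℕ) (hb : b ≤ s.sum*y) :
    (c s y).coeff b = (c s y).coeff (s.sum*y - b) := by
  conv_lhs => rw [← reflect_c s y]
  rw [coeff_reflect, revAt_le hb]



lemma mem_span_sym (p : ℚ[X]) (d : ℕ) (hdeg : p.natDegree ≤ d)
    (hsym : ∀ b ≤ d, p.coeff b = p.coeff (d - b)) :
    p ∈ Submodule.span ℚ
      (Set.range fun b : Fin (d/2+1) => (X:ℚ[X])^(b:ℕ) + X^(d-(b:ℕ))) := by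
  have hgen : ∀ b ≤ d, (X:ℚ[X])^b + X^(d-b) ∈ Submodule.span ℚ
      (Set.range fun b : Fin (d/2+1) => (X:ℚ[X])^(b:ℕ) + X^(d-(b:ℕ))) := by
    intro b hb
    rcases le_or_gt b (d-b) with h | h
    · have : (X:ℚ[X])^b + X^(d-b)
          = (fun b : Fin (d/2+1) => (X:ℚ[X])^(b:ℕ) + X^(d-(b:ℕ))) ⟨b, by omega⟩ := rfl
      rw [this]
      exact Submodule.subset_span (Set.mem_range_self _)
    · have : (X:ℚ[X])^b + X^(d-b)
          = (fun b : Fin (d/2+1) => (X:ℚ[X])^(b:ℕ) + X^(d-(b:ℕ))) ⟨d-b, by omega⟩ := by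
        simp only []
        have : d - (d - b) = b := by omega
        rw [this, add_comm]
      rw [this]
      exact Submodule.subset_span (Set.mem_range_self _)
  have h0 : p = ∑ b ∈ Finset.range (d+1), (p.coeff b) • (X:ℚ[X])^b := by
    conv_lhs => rw [p.as_sum_range' (d+1) (Nat.lt_succ_of_le hdeg)]
    exact Finset.sum_congr rfl fun b _ => (smul_X_eq_monomial).symm
  have hsecond : ∑ b ∈ Finset.range (d+1), (p.coeff b / 2) • (X:ℚ[X])^(d-b)
      = ∑ b ∈ Finset.range (d+1), (p.coeff b / 2) • (X:ℚ[X])^b := by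
    have hrefl := Finset.sum_range_reflect
      (fun b => (p.coeff b / 2) • (X:ℚ[X])^(d-b)) (d+1)
    rw [← hrefl]
    apply Finset.sum_congr rfl
    intro j hj
    have hj' : j ≤ d := Nat.lt_succ_iff.mp (Finset.mem_range.mp hj)
    have h1 : d + 1 - 1 - j = d - j := by omega
    have h2 : d - (d - j) = j := by omega
    rw [h1, h2, (hsym j hj').symm]
  have hrep : p = ∑ b ∈ Finset.range (d+1),
      (p.coeff b / 2) • ((X:ℚ[X])^b + X^(d-b)) := by
    have : ∑ b ∈ Finset.range (d+1), (p.coeff b / 2) • ((X:ℚ[X])^b + X^(d-b))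
        = ∑ b ∈ Finset.range (d+1), (p.coeff b / 2) • (X:ℚ[X])^b
          + ∑ b ∈ Finset.range (d+1), (p.coeff b / 2) • (X:ℚ[X])^(d-b) := by
      rw [← Finset.sum_add_distrib]
      exact Finset.sum_congr rfl fun b _ => smul_add _ _ _
    rw [this, hsecond, ← Finset.sum_add_distrib]
    conv_lhs => rw [h0]
    apply Finset.sum_congr rfl
    intro b _
    rw [← add_smul]
    congr 1
    ring
  rw [hrep]
  exact Submodule.sum_mem _ fun b hb => Submodule.smul_mem _ _
    (hgen b (Nat.lt_succ_iff.mp (Finset.mem_range.mp hb)))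



lemma count_le (n : ℕ) : ∑ y ∈ Finset.range (n+1), (n*y/2 + 1) ≤ (n^3+n+2)/2 := by
  have key : (∑ y ∈ Finset.range (n+1), (n*y/2 + 1)) * 2 ≤ n^3+n+2 := by
    match n with
    | 0 => simp
    | 1 => norm_num [Finset.sum_range_succ]
    | (k+2) =>
      set n := k + 2
      have hterm : ∀ y ∈ Finset.range (n+1), (n*y/2 + 1) * 2 ≤ n*y + 2 := by
        intro y _
        have := Nat.div_mul_le_self (n*y) 2
        omega
      have h1 : (∑ y ∈ Finset.range (n+1), (n*y/2 + 1)) * 2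
          ≤ ∑ y ∈ Finset.range (n+1), (n*y + 2) := by
        rw [Finset.sum_mul]
        exact Finset.sum_le_sum hterm
      have h2 : ∑ y ∈ Finset.range (n+1), (n*y + 2)
          = n * (∑ y ∈ Finset.range (n+1), y) + 2*(n+1) := by
        rw [Finset.sum_add_distrib, ← Finset.mul_sum, Finset.sum_const, Finset.card_range]
        ring
      have h3 : (∑ y ∈ Finset.range (n+1), y) * 2 = (n+1)*n :=
        Finset.sum_range_id_mul_two (n+1)
      -- 2*(n*T) = n*(n+1)*n
      have h4 : 2 * (n * (∑ y ∈ Finset.range (n+1), y)) = n * ((n+1)*n) := by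
        rw [← h3]; ring
      have h5 : 2 * (n^3 + n + 2) ≥ n*((n+1)*n) + 2*(2*(n+1)) := by
        have hn : 2 ≤ n := by omega
        have hcube : n^3 = n*n*n := by ring
        have e0 : 2*n ≤ n*n := Nat.mul_le_mul_right n hn
        have e1 : 2*(n*n) ≤ n*(n*n) := Nat.mul_le_mul_right (n*n) hn
        nlinarith [e0, e1, hcube]
      omega
  omega


end PartDep


open PartDep

/-- If `m > (n^3+n+2)/2` and `τ(1), …, τ(m)` are `m` distinct partitions of `n`, then there are
rationals `α_1, …, α_m`, not all zero, such that for every `y ∈ ℕ` the polynomial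
`∑_i α_i · c(τ(i), y)` is the zero polynomial in `ℚ[q]`, where
`c(τ,y) = ∏_i (q^{n_i y} + q^{n_i (y-1)} + ⋯ + 1)`. -/
theorem partitions_dependent (n m : ℕ) (hm : (n ^ 3 + n + 2) / 2 < m)
    (τ : Fin m → Nat.Partition n) (hτ : Function.Injective τ) :
    ∃ α : Fin m → ℚ, α ≠ 0 ∧ ∀ y : ℕ,
      ∑ i : Fin m, α i •
        (Multiset.map (fun p => ∑ j ∈ Finset.range (y + 1), (X : ℚ[X]) ^ (p * j))
          (τ i).parts).prod = 0 := by
  classical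
  obtain ⟨α, hα0, htr⟩ : ∃ α : Fin m → ℚ, α ≠ 0 ∧
      ∀ y : Fin (n+1), ∑ i : Fin m, α i • c (τ i).parts (y : ℕ) = 0 := by
    by_contra hno
    push_neg at hno
    set w : Fin m → (Fin (n+1) → ℚ[X]) := fun i y => c (τ i).parts (y:ℕ) with hw
    set G : (Σ y : Fin (n+1), Fin (n * (y:ℕ) / 2 + 1)) → (Fin (n+1) → ℚ[X]) :=
      fun z => Pi.single z.1 ((X:ℚ[X])^((z.2:ℕ)) + X^(n*((z.1:ℕ)) - (z.2:ℕ))) with hG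
    have hmem : ∀ i, w i ∈ Submodule.span ℚ (Set.range G) := by
      intro i
      have hw1 : w i = ∑ y : Fin (n+1), Pi.single y (w i y) :=
        (Finset.univ_sum_single (w i)).symm
      rw [hw1]
      apply Submodule.sum_mem
      intro y _
      have hdeg : (c (τ i).parts (y:ℕ)).natDegree ≤ n * (y:ℕ) := by
        have := natDegree_c_le (τ i).parts (y:ℕ)
        rwa [(τ i).parts_sum] at this
      have hsymc : ∀ b ≤ n * (y:ℕ), (c (τ i).parts (y:ℕ)).coeff b
          = (c (τ i).parts (y:ℕ)).coeff (n*(y:ℕ) - b) := by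
        intro b hb
        have h := coeff_sym (τ i).parts (y:ℕ) b (by rwa [(τ i).parts_sum])
        rwa [(τ i).parts_sum] at h
      have hspan := mem_span_sym _ (n*(y:ℕ)) hdeg hsymc
      have hmap := Submodule.mem_map_of_mem
        (f := LinearMap.single ℚ (fun _ : Fin (n+1) => ℚ[X]) y) hspan
      rw [Submodule.map_span] at hmap
      refine Submodule.span_mono ?_ hmap
      rintro _ ⟨_, ⟨b, rfl⟩, rfl⟩
      exact ⟨⟨y, b⟩, rfl⟩
    have hLI : LinearIndependent ℚ w := by
      rw [Fintype.linearIndependent_iff]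
      intro g hg
      have hgz : ∀ y : Fin (n+1), ∑ i, g i • c (τ i).parts (y:ℕ) = 0 := by
        intro y
        have hgy := congrFun hg y
        simpa [w, Finset.sum_apply] using hgy
      have hg0 : g = 0 := by
        by_contra hgne
        obtain ⟨y, hy⟩ := hno g hgne
        exact hy (hgz y)
      intro i; rw [hg0]; rfl
    set M := Submodule.span ℚ (Set.range G) with hM
    haveI : FiniteDimensional ℚ M := FiniteDimensional.span_of_finite ℚ (Set.finite_range G)
    have hLI' : LinearIndependent ℚ (fun i => (⟨w i, hmem i⟩ : M)) := by
      apply LinearIndependent.of_comp M.subtype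
      exact hLI
    have hcard := hLI'.fintype_card_le_finrank
    have hrank : Module.finrank ℚ M ≤ Fintype.card (Σ y : Fin (n+1), Fin (n*(y:ℕ)/2+1)) :=
      finrank_range_le_card G
    have hI : Fintype.card (Σ y : Fin (n+1), Fin (n*(y:ℕ)/2+1))
        = ∑ y ∈ Finset.range (n+1), (n*y/2+1) := by
      rw [Fintype.card_sigma]
      rw [Finset.sum_congr rfl fun y _ => Fintype.card_fin _]
      exact Fin.sum_univ_eq_sum_range (fun y => n*y/2+1) (n+1)
    have hcnt := count_le n
    have hfin : Fintype.card (Fin m) = m := Fintype.card_fin m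
    omega
  -- Step 2: extend to all y via the recurrence
  set f : ℕ → ℚ[X] := fun y => ∑ i, α i • c (τ i).parts y with hf
  have hrecf : ∀ y, ∑ j ∈ Finset.range (n+2), (Q n).coeff j * f (y+j) = 0 := by
    intro y
    have hswap : ∑ j ∈ Finset.range (n+2), (Q n).coeff j * f (y+j)
        = ∑ i : Fin m, α i •
            (∑ j ∈ Finset.range (n+2), (Q n).coeff j * c (τ i).parts (y+j)) := by
      simp only [hf, Finset.mul_sum]
      rw [Finset.sum_comm]
      apply Finset.sum_congr rfl
      intro i _
      rw [Finset.smul_sum]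
      exact Finset.sum_congr rfl fun j _ => (mul_smul_comm _ _ _)
    rw [hswap]
    have hzero : ∀ i : Fin m,
        (∑ j ∈ Finset.range (n+2), (Q n).coeff j * c (τ i).parts (y+j)) = 0 := fun i =>
      rec_core n (τ i).parts (fun p hp => (τ i).parts_pos hp) (τ i).parts_sum y
    rw [Finset.sum_congr rfl fun i _ => by rw [hzero i, smul_zero]]
    exact Finset.sum_const_zero
  have hzero : ∀ y, f y = 0 := by
    intro y
    induction y using Nat.strong_induction_on with
    | _ y ih =>
      rcases le_or_gt y n with hy | hy
      · exact htr ⟨y, by omega⟩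
      · have hrec := hrecf (y - (n+1))
        rw [Finset.sum_range_succ] at hrec
        have he : y - (n+1) + (n+1) = y := by omega
        rw [Q_coeff_top, one_mul, he] at hrec
        have hz : ∀ j ∈ Finset.range (n+1), (Q n).coeff j * f (y - (n+1) + j) = 0 := by
          intro j hj
          have hj' : j < n+1 := Finset.mem_range.mp hj
          rw [ih (y - (n+1) + j) (by omega), mul_zero]
        rw [Finset.sum_congr rfl hz, Finset.sum_const_zero, zero_add] at hrec
        exact hrec
  exact ⟨α, hα0, fun y => hzero y⟩
end

section
/- There exists n (e.g., any n ≥ 39) and rational numbers α_τ indexed by partitions τ of n, not all zero, such that ∑_{τ⊢n} α_τ · c(τ,y) is the zero polynomial in q for every non-negative integer y; i.e., the sequences (c(τ,y))_{y≥0} for τ ⊢ n are ℚ-linearly dependent. -/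
open Polynomial

private def Pa : Nat.Partition 10 := ⟨{4,3,1,1,1}, by decide, by decide⟩
private def Pb : Nat.Partition 10 := ⟨{4,2,2,1,1}, by decide, by decide⟩
private def Pc : Nat.Partition 10 := ⟨{4,1,1,1,1,1,1}, by decide, by decide⟩
private def Pd : Nat.Partition 10 := ⟨{3,2,2,2,1}, by decide, by decide⟩
private def Pe : Nat.Partition 10 := ⟨{3,2,1,1,1,1,1}, by decide, by decide⟩
private def Pf : Nat.Partition 10 := ⟨{2,2,2,1,1,1,1}, by decide, by decide⟩

private def alp : Nat.Partition 10 → ℚ := fun τ =>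
  if τ = Pa then 2 else if τ = Pb then -3 else if τ = Pc then 1 else
  if τ = Pd then 1 else if τ = Pe then -3 else if τ = Pf then 2 else 0

private lemma key {R : Type*} [CommRing R] (u v g1 g2 g3 g4 : R)
    (h1 : (v - 1) * g1 = u - 1) (h2 : (v^2 - 1) * g2 = u^2 - 1)
    (h3 : (v^3 - 1) * g3 = u^3 - 1) (h4 : (v^4 - 1) * g4 = u^4 - 1) :
    ((v-1)^6 * (v^2-1)^3 * (v^3-1) * (v^4-1)) *
      (2*(g4*g3*g1^3) - 3*(g4*g2^2*g1^2) + g4*g1^6 + g3*g2^3*g1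
        - 3*(g3*g2*g1^5) + 2*(g2^3*g1^4)) = 0 := by
  calc ((v-1)^6 * (v^2-1)^3 * (v^3-1) * (v^4-1)) *
      (2*(g4*g3*g1^3) - 3*(g4*g2^2*g1^2) + g4*g1^6 + g3*g2^3*g1
        - 3*(g3*g2*g1^5) + 2*(g2^3*g1^4))
      = 2*(((v^4-1)*g4)*((v^3-1)*g3)*((v-1)*g1)^3)*((v-1)^3*(v^2-1)^3)
        - 3*(((v^4-1)*g4)*((v^2-1)*g2)^2*((v-1)*g1)^2)*((v-1)^4*(v^2-1)*(v^3-1))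
        + (((v^4-1)*g4)*((v-1)*g1)^6)*((v^2-1)^3*(v^3-1))
        + (((v^3-1)*g3)*((v^2-1)*g2)^3*((v-1)*g1))*((v-1)^5*(v^4-1))
        - 3*(((v^3-1)*g3)*((v^2-1)*g2)*((v-1)*g1)^5)*((v-1)*(v^2-1)^2*(v^4-1))
        + 2*(((v^2-1)*g2)^3*((v-1)*g1)^4)*((v-1)^2*(v^3-1)*(v^4-1)) := by ring
    _ = 2*((u^4-1)*(u^3-1)*(u-1)^3)*((v-1)^3*(v^2-1)^3)
        - 3*((u^4-1)*(u^2-1)^2*(u-1)^2)*((v-1)^4*(v^2-1)*(v^3-1))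
        + ((u^4-1)*(u-1)^6)*((v^2-1)^3*(v^3-1))
        + ((u^3-1)*(u^2-1)^3*(u-1))*((v-1)^5*(v^4-1))
        - 3*((u^3-1)*(u^2-1)*(u-1)^5)*((v-1)*(v^2-1)^2*(v^4-1))
        + 2*((u^2-1)^3*(u-1)^4)*((v-1)^2*(v^3-1)*(v^4-1)) := by rw [h1, h2, h3, h4]
    _ = 0 := by ring

private lemma xpow_sub_one_ne (j : ℕ) (hj : j ≠ 0) : ((X:ℚ[X])^j - 1) ≠ 0 := fun h => by
  have := congrArg (eval 0) h
  simp [zero_pow hj] at this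

/-- There exists `n` and rationals `α_τ` indexed by the partitions `τ ⊢ n`, not all zero, such
that `∑_{τ ⊢ n} α_τ · c(τ,y)` is the zero polynomial in `q` for every `y ∈ ℕ`, where
`c(τ,y) = ∏_i (q^{n_i y} + ⋯ + q^{n_i} + 1)`; i.e. the sequences `(c(τ,y))_{y ≥ 0}`, `τ ⊢ n`,
are linearly dependent over ℚ. -/
theorem partitions_conjecture_false :
    ∃ n : ℕ, ∃ α : Nat.Partition n → ℚ, α ≠ 0 ∧ ∀ y : ℕ,
      ∑ τ : Nat.Partition n, α τ •
        (Multiset.map (fun p => ∑ j ∈ Finset.range (y + 1), (X : ℚ[X]) ^ (p * j))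
          τ.parts).prod = 0 := by
  refine ⟨10, alp, ?_, ?_⟩
  · intro h
    have h2 := congrFun h Pa
    simp [alp] at h2
  · intro y
    -- abbreviations for the geometric sums
    have hgeom : ∀ p : ℕ, ((X:ℚ[X])^p - 1) * (∑ j ∈ Finset.range (y+1), (X:ℚ[X])^(p*j))
        = ((X:ℚ[X])^(y+1))^p - 1 := by
      intro p
      have hb : ∀ j, (X:ℚ[X])^(p*j) = ((X:ℚ[X])^p)^j := fun j => by rw [pow_mul]
      simp_rw [hb]
      rw [mul_comm, geom_sum_mul, ← pow_mul, ← pow_mul, Nat.mul_comm]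
    have h1 : ((X:ℚ[X]) - 1) * (∑ j ∈ Finset.range (y+1), (X:ℚ[X])^(1*j))
        = (X:ℚ[X])^(y+1) - 1 := by
      have := hgeom 1; rwa [pow_one, pow_one] at this
    have hKey := key ((X:ℚ[X])^(y+1)) (X:ℚ[X])
      (∑ j ∈ Finset.range (y+1), (X:ℚ[X])^(1*j))
      (∑ j ∈ Finset.range (y+1), (X:ℚ[X])^(2*j))
      (∑ j ∈ Finset.range (y+1), (X:ℚ[X])^(3*j))
      (∑ j ∈ Finset.range (y+1), (X:ℚ[X])^(4*j))
      h1 (hgeom 2) (hgeom 3) (hgeom 4)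
    have hDne : (((X:ℚ[X])-1)^6 * ((X:ℚ[X])^2-1)^3 * ((X:ℚ[X])^3-1) * ((X:ℚ[X])^4-1)) ≠ 0 := by
      have e1 : ((X:ℚ[X]) - 1) ≠ 0 := by
        have := xpow_sub_one_ne 1 one_ne_zero; rwa [pow_one] at this
      exact mul_ne_zero (mul_ne_zero (mul_ne_zero (pow_ne_zero _ e1)
        (pow_ne_zero _ (xpow_sub_one_ne 2 (by norm_num)))) (xpow_sub_one_ne 3 (by norm_num)))
        (xpow_sub_one_ne 4 (by norm_num))
    have hS := (mul_eq_zero.mp hKey).resolve_left hDne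
    -- reduce the big sum to the six supported partitions
    rw [← Finset.sum_subset
        (Finset.subset_univ ({Pa,Pb,Pc,Pd,Pe,Pf} : Finset (Nat.Partition 10)))
        (by
          intro τ _ hτ
          simp only [Finset.mem_insert, Finset.mem_singleton, not_or] at hτ
          obtain ⟨n1,n2,n3,n4,n5,n6⟩ := hτ
          simp [alp, n1, n2, n3, n4, n5, n6])]
    rw [Finset.sum_insert (by decide), Finset.sum_insert (by decide),
      Finset.sum_insert (by decide), Finset.sum_insert (by decide),
      Finset.sum_insert (by decide), Finset.sum_singleton]
    have va : alp Pa = 2 := by simp [alp]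
    have vb : alp Pb = -3 := by simp [alp, show Pb ≠ Pa from by decide]
    have vc : alp Pc = 1 := by
      simp [alp, show Pc ≠ Pa from by decide, show Pc ≠ Pb from by decide]
    have vd : alp Pd = 1 := by
      simp [alp, show Pd ≠ Pa from by decide, show Pd ≠ Pb from by decide,
        show Pd ≠ Pc from by decide]
    have ve : alp Pe = -3 := by
      simp [alp, show Pe ≠ Pa from by decide, show Pe ≠ Pb from by decide,
        show Pe ≠ Pc from by decide, show Pe ≠ Pd from by decide]
    have vf : alp Pf = 2 := by
      simp [alp, show Pf ≠ Pa from by decide, show Pf ≠ Pb from by decide,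
        show Pf ≠ Pc from by decide, show Pf ≠ Pd from by decide, show Pf ≠ Pe from by decide]
    rw [va, vb, vc, vd, ve, vf]
    simp only [Pa, Pb, Pc, Pd, Pe, Pf, Multiset.insert_eq_cons, Multiset.map_cons,
      Multiset.map_singleton, Multiset.prod_cons, Multiset.prod_singleton,
      Polynomial.smul_eq_C_mul, map_neg, map_ofNat, map_one]
    linear_combination hS
end

section
/- For a vertex-weighted graph G with weight function ω: V → ℕ and a non-loop edge e, the (r,q)-chromatic function satisfies the deletion-contraction identity M^ω_{r,q}(G;k) = M^ω_{r,q}(G−e;k) − M^ω_{r,q}(G/e;k), where in G/e the new vertex obtained by contracting e = uv gets weight ω(u)+ω(v). -/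
open scoped Classical

/-- A (multi)graph with vertex set a finite set of naturals, edge labels a finite set of
naturals, each edge having an unordered pair of endpoints lying in the vertex set, and a
vertex-weight function. -/
structure WGraph where
  verts : Finset ℕ
  edges : Finset ℕ
  ends : ℕ → Sym2 ℕ
  ends_mem : ∀ e ∈ edges, ∀ v ∈ ends e, v ∈ verts
  w : ℕ → ℕ

namespace WGraph

/-- Two vertices are joined in the spanning subgraph with edge set `A`. -/
def adj (G : WGraph) (A : Finset ℕ) (u v : ℕ) : Prop := ∃ i ∈ A, G.ends i = s(u, v)

/-- Reachability in the spanning subgraph with edge set `A`. -/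
def reach (G : WGraph) (A : Finset ℕ) : ℕ → ℕ → Prop := Relation.ReflTransGen (G.adj A)

/-- The set of connected components of the spanning subgraph `(V, A)`. -/
noncomputable def components (G : WGraph) (A : Finset ℕ) : Finset (Finset ℕ) :=
  G.verts.image (fun v => G.verts.filter (G.reach A v))

/-- The total weight of a set of vertices. -/
def wt (G : WGraph) (C : Finset ℕ) : ℕ := ∑ v ∈ C, G.w v

/-- All `k`-colourings: maps `V → {0, …, k-1}`, extended by `0` off the vertex set. -/
def allCol (G : WGraph) (k : ℕ) : Set (ℕ → ℕ) :=
  {s | (∀ v ∈ G.verts, s v < k) ∧ ∀ v ∉ G.verts, s v = 0}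

/-- Proper `k`-colourings: no edge is monochromatic. -/
def properCol (G : WGraph) (k : ℕ) : Set (ℕ → ℕ) :=
  {s ∈ G.allCol k | ∀ e ∈ G.edges, ∀ a b : ℕ, G.ends e = s(a, b) → s a ≠ s b}

/-- The weighted `(r,q)`-chromatic function
`M^ω_{r,q}(G;k) = ∑_{s ∈ col(G;k)} r^{∑_{v ∈ V} ω(v) q^{s(v)}}`. -/
noncomputable def Mw (G : WGraph) (r q : ℝ) (k : ℕ) : ℝ :=
  ∑ᶠ s ∈ G.properCol k, r ^ (∑ v ∈ G.verts, (G.w v : ℝ) * q ^ (s v))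

/-- The unweighted `(r,q)`-chromatic function
`M_{r,q}(G;k) = ∑_{s ∈ col(G;k)} r^{∑_{v ∈ V} q^{s(v)}}`. -/
noncomputable def M (G : WGraph) (r q : ℝ) (k : ℕ) : ℝ :=
  ∑ᶠ s ∈ G.properCol k, r ^ (∑ v ∈ G.verts, q ^ (s v))

/-- The weighted `(r,q)`-dichromatic function
`B^ω_{r,q}(G;x,k) = ∑_{A ⊆ E} x^{|A|} ∏_{C ∈ com(A)} ∑_{i=0}^{k-1} r^{ω(C) q^i}`. -/
noncomputable def Bw (G : WGraph) (r q x : ℝ) (k : ℕ) : ℝ :=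
  ∑ A ∈ G.edges.powerset, x ^ A.card *
    ∏ C ∈ G.components A, ∑ i ∈ Finset.range k, r ^ ((G.wt C : ℝ) * q ^ i)

/-- The unweighted `(r,q)`-dichromatic function
`B_{r,q}(G;x,k) = ∑_{A ⊆ E} x^{|A|} ∏_{C ∈ com(A)} ∑_{i=0}^{k-1} r^{|C| q^i}`. -/
noncomputable def B (G : WGraph) (r q x : ℝ) (k : ℕ) : ℝ :=
  ∑ A ∈ G.edges.powerset, x ^ A.card *
    ∏ C ∈ G.components A, ∑ i ∈ Finset.range k, r ^ ((C.card : ℝ) * q ^ i)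

/-- Deletion of an edge. -/
def delete (G : WGraph) (e : ℕ) : WGraph where
  verts := G.verts
  edges := G.edges.erase e
  ends := G.ends
  ends_mem := fun i hi => G.ends_mem i (Finset.mem_of_mem_erase hi)
  w := G.w

/-- Contraction of a non-loop edge `e` with ends `a`, `b`: the vertex `b` is merged into `a`,
whose new weight is `ω(a) + ω(b)`. -/
def contract (G : WGraph) (e a b : ℕ) : WGraph where
  verts := insert a (G.verts.erase b)
  edges := G.edges.erase e
  ends := fun i => (G.ends i).map (fun v => if v = b then a else v)
  ends_mem := by
    intro i hi v hv
    rcases Sym2.mem_map.1 hv with ⟨u, hu, rfl⟩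
    by_cases h : u = b
    · simp [h]
    · simp only [if_neg h]
      exact Finset.mem_insert_of_mem
        (Finset.mem_erase.2 ⟨h, G.ends_mem i (Finset.mem_of_mem_erase hi) u hu⟩)
  w := fun v => if v = a then G.w a + G.w b else G.w v

end WGraph

open WGraph

lemma allCol_finite (G : WGraph) (k : ℕ) : (G.allCol k).Finite := by
  have hinj : Set.InjOn (fun s : ℕ → ℕ => fun v : ↥G.verts => (⟨min (s v) k, by omega⟩ : Fin (k+1)))
      (G.allCol k) := by
    intro s hs t ht h
    funext v
    by_cases hv : v ∈ G.verts
    · have := congrFun h ⟨v, hv⟩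
      simp only [Fin.mk.injEq] at this
      rwa [min_eq_left (hs.1 v hv).le, min_eq_left (ht.1 v hv).le] at this
    · rw [hs.2 v hv, ht.2 v hv]
  exact Set.Finite.of_finite_image (Set.toFinite _) hinj

lemma properCol_finite (G : WGraph) (k : ℕ) : (G.properCol k).Finite :=
  (allCol_finite G k).subset fun _ hs => hs.1

/-- Deletion–contraction for the weighted `(r,q)`-chromatic function: for a non-loop edge
`e = ab`, `M^ω_{r,q}(G;k) = M^ω_{r,q}(G−e;k) − M^ω_{r,q}(G/e;k)`, where in `G/e` the new
vertex gets weight `ω(a)+ω(b)`. -/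
theorem Mw_deletion_contraction (G : WGraph) (e a b : ℕ) (he : e ∈ G.edges)
    (hab : a ≠ b) (hends : G.ends e = s(a, b)) (r q : ℝ) (hr : 0 < r) (k : ℕ) :
    G.Mw r q k = (G.delete e).Mw r q k - (G.contract e a b).Mw r q k := by
  classical
  have ha : a ∈ G.verts := G.ends_mem e he a (by rw [hends]; exact Sym2.mem_mk_left a b)
  have hb : b ∈ G.verts := G.ends_mem e he b (by rw [hends]; exact Sym2.mem_mk_right a b)
  set f : (ℕ → ℕ) → ℝ := fun s => r ^ (∑ v ∈ G.verts, (G.w v : ℝ) * q ^ (s v)) with hfdef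
  set D : Set (ℕ → ℕ) := {s ∈ (G.delete e).properCol k | s a = s b} with hDdef
  set σ : ℕ → ℕ := fun v => if v = b then a else v with hσdef
  have hσb : σ b = a := by simp [hσdef]
  have hσa : σ a = a := by simp [hσdef, hab]
  have hσne : ∀ v, σ v ≠ b := by
    intro v
    by_cases h : v = b
    · simpa [hσdef, h] using hab
    · simpa [hσdef, h] using h
  -- delete has same allCol
  have hallC : (G.delete e).allCol k = G.allCol k := rfl
  -- split of properCol of delete
  have hsub : G.properCol k ⊆ (G.delete e).properCol k := by
    rintro s ⟨h1, h2⟩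
    exact ⟨h1, fun i hi => h2 i (Finset.mem_of_mem_erase hi)⟩
  have hsplit : (G.delete e).properCol k = G.properCol k ∪ D := by
    ext s
    constructor
    · intro hs
      by_cases hsa : s a = s b
      · exact Or.inr ⟨hs, hsa⟩
      · refine Or.inl ⟨hs.1, fun i hi x y hxy => ?_⟩
        by_cases hie : i = e
        · subst hie
          rw [hends] at hxy
          rcases Sym2.eq_iff.1 hxy with ⟨rfl, rfl⟩ | ⟨rfl, rfl⟩
          · exact hsa
          · exact Ne.symm hsa
        · exact hs.2 i (Finset.mem_erase.2 ⟨hie, hi⟩) x y hxy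
    · rintro (hs | hs)
      · exact hsub hs
      · exact hs.1
  have hdisj : Disjoint (G.properCol k) D := by
    rw [Set.disjoint_left]
    rintro s hs ⟨_, hsa⟩
    exact hs.2 e he a b hends hsa
  have hDfin : D.Finite := (properCol_finite (G.delete e) k).subset fun _ h => h.1
  -- Step 1: Mw of delete
  have h1 : (G.delete e).Mw r q k = G.Mw r q k + ∑ᶠ s ∈ D, f s := by
    show ∑ᶠ s ∈ (G.delete e).properCol k, f s = _
    rw [hsplit, finsum_mem_union hdisj (properCol_finite G k) hDfin]
    rfl
  -- Step 2: contraction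
  have hupd : ∀ s ∈ D, ∀ v, Function.update s b 0 (σ v) = s v := by
    rintro s ⟨_, hsa⟩ v
    rw [Function.update_of_ne (hσne v)]
    by_cases h : v = b
    · subst h; rw [hσb, hsa]
    · simp [hσdef, h]
  have hcverts : (G.contract e a b).verts = G.verts.erase b := by
    show insert a (G.verts.erase b) = G.verts.erase b
    exact Finset.insert_eq_self.2 (Finset.mem_erase.2 ⟨hab, ha⟩)
  have himg : (fun s => Function.update s b 0) '' D = (G.contract e a b).properCol k := by
    ext s'
    constructor
    · rintro ⟨s, hsD, rfl⟩
      obtain ⟨⟨⟨hlt, hz⟩, hpr⟩, hsa⟩ := hsD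
      dsimp only
      refine ⟨⟨?_, ?_⟩, ?_⟩
      · intro v hv
        rw [hcverts] at hv
        obtain ⟨hvb, hvV⟩ := Finset.mem_erase.1 hv
        rw [Function.update_of_ne hvb]
        exact hlt v hvV
      · intro v hv
        rw [hcverts] at hv
        by_cases hvb : v = b
        · subst hvb; simp
        · rw [Function.update_of_ne hvb]
          exact hz v (fun hvV => hv (Finset.mem_erase.2 ⟨hvb, hvV⟩))
      · intro i hi x y hxy
        obtain ⟨u, v, huv⟩ : ∃ u v, G.ends i = s(u, v) := by
          induction G.ends i using Sym2.ind with
          | _ u v => exact ⟨u, v, rfl⟩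
        have : (G.contract e a b).ends i = s(σ u, σ v) := by
          show Sym2.map _ (G.ends i) = _
          rw [huv]; rfl
        rw [this] at hxy
        have hne : s u ≠ s v := hpr i hi u v huv
        rcases Sym2.eq_iff.1 hxy.symm with ⟨rfl, rfl⟩ | ⟨rfl, rfl⟩
        · rw [hupd s ⟨⟨⟨hlt, hz⟩, hpr⟩, hsa⟩ u, hupd s ⟨⟨⟨hlt, hz⟩, hpr⟩, hsa⟩ v]
          exact hne
        · rw [hupd s ⟨⟨⟨hlt, hz⟩, hpr⟩, hsa⟩ u, hupd s ⟨⟨⟨hlt, hz⟩, hpr⟩, hsa⟩ v]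
          exact hne.symm
    · rintro ⟨⟨hlt, hz⟩, hpr⟩
      have hs'b : s' b = 0 := by
        apply hz
        rw [hcverts]
        simp
      have haC : a ∈ (G.contract e a b).verts := by
        rw [hcverts]; exact Finset.mem_erase.2 ⟨hab, ha⟩
      set s : ℕ → ℕ := Function.update s' b (s' a) with hsdef
      have hsv : ∀ v, v ≠ b → s v = s' v := fun v hv => Function.update_of_ne hv _ _
      have hsb : s b = s' a := Function.update_self _ _ _
      have hsσ : ∀ v, s v = s' (σ v) := by
        intro v
        by_cases h : v = b
        · subst h; rw [hsb, hσb]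
        · rw [hsv v h]; simp [hσdef, h]
      have hsD : s ∈ D := by
        refine ⟨⟨⟨?_, ?_⟩, ?_⟩, ?_⟩
        · intro v hv
          by_cases h : v = b
          · subst h; rw [hsb]; exact hlt a haC
          · rw [hsv v h]
            exact hlt v (by rw [hcverts]; exact Finset.mem_erase.2 ⟨h, hv⟩)
        · intro v hv
          have hvb : v ≠ b := fun h => hv (h ▸ hb)
          rw [hsv v hvb]
          apply hz
          rw [hcverts]
          exact fun h => hv (Finset.mem_of_mem_erase h)
        · intro i hi u v huv
          have huv' : G.ends i = s(u, v) := huv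
          have : (G.contract e a b).ends i = s(σ u, σ v) := by
            show Sym2.map _ (G.ends i) = _
            rw [huv']; rfl
          have := hpr i hi (σ u) (σ v) this
          rw [hsσ u, hsσ v]
          exact this
        · rw [hsv a hab, hsb]
      refine ⟨s, hsD, ?_⟩
      show Function.update s b 0 = s'
      funext v
      by_cases h : v = b
      · subst h; rw [Function.update_self, hs'b]
      · rw [Function.update_of_ne h, hsv v h]
  have hinj : D.InjOn (fun s => Function.update s b 0) := by
    rintro s ⟨_, hsa⟩ t ⟨_, hta⟩ h
    funext v
    by_cases hv : v = b
    · subst hv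
      have := congrFun h a
      simp only [Function.update_of_ne hab] at this
      rw [← hsa, ← hta, this]
    · have := congrFun h v
      simp only [Function.update_of_ne hv] at this
      exact this
  have h2 : (G.contract e a b).Mw r q k = ∑ᶠ s ∈ D, f s := by
    show ∑ᶠ s ∈ (G.contract e a b).properCol k, _ = _
    rw [← himg, finsum_mem_image hinj]
    apply finsum_mem_congr rfl
    intro s hsD
    obtain ⟨_, hsa⟩ := hsD
    congr 1
    have haE : a ∈ G.verts.erase b := Finset.mem_erase.2 ⟨hab, ha⟩
    have hL : ∀ v ∈ G.verts.erase b, ((G.contract e a b).w v : ℝ) * q ^ (Function.update s b 0 v)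
        = ((G.contract e a b).w v : ℝ) * q ^ (s v) := by
      intro v hv
      rw [Function.update_of_ne (Finset.mem_erase.1 hv).1]
    rw [hcverts, Finset.sum_congr rfl hL,
      ← Finset.add_sum_erase _ _ haE, ← Finset.add_sum_erase _ (fun v => (G.w v : ℝ) * q ^ s v) hb,
      ← Finset.add_sum_erase _ (fun v => (G.w v : ℝ) * q ^ s v) haE]
    have hwa : ((G.contract e a b).w a : ℝ) = (G.w a : ℝ) + (G.w b : ℝ) := by
      show ((if a = a then G.w a + G.w b else G.w a : ℕ) : ℝ) = _
      rw [if_pos rfl]; push_cast; ring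
    have hrest : ∀ v ∈ (G.verts.erase b).erase a,
        ((G.contract e a b).w v : ℝ) * q ^ (s v) = (G.w v : ℝ) * q ^ (s v) := by
      intro v hv
      have : (G.contract e a b).w v = G.w v := by
        show (if v = a then _ else _) = _
        rw [if_neg (Finset.mem_erase.1 hv).1]
      rw [this]
    rw [Finset.sum_congr rfl hrest, hwa, hsa]
    ring
  rw [h1, h2]
  ring
end

section
/- For a vertex-weighted graph G = (V,E) with weight function ω: V → ℕ, the (r,q)-chromatic function has the spanning-subgraph expansion M^ω_{r,q}(G;k) = ∑_{A ⊆ E} (−1)^{|A|} ∏_{C ∈ com(A)} ∑_{i=0}^{k−1} r^{ω(C)·q^i}, where com(A) is the set of connected components of the spanning subgraph (V,A) and ω(C) = ∑_{v∈C} ω(v). -/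
open scoped Classical

open WGraph

namespace WGraphAux

open WGraph Finset

variable (G : WGraph)

/-- The connected component of `v`. -/
noncomputable def compOf (G : WGraph) (A : Finset ℕ) (v : ℕ) : Finset ℕ :=
  G.verts.filter (G.reach A v)

lemma adj_symm {A u v} (h : G.adj A u v) : G.adj A v u := by
  obtain ⟨i, hi, he⟩ := h
  exact ⟨i, hi, he.trans (Sym2.eq_swap)⟩

lemma reach_symm {A u v} (h : G.reach A u v) : G.reach A v u :=
  (@Relation.ReflTransGen.stdSymm _ _ ⟨fun _ _ hab => adj_symm G hab⟩).symm _ _ h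

lemma compOf_eq_of_reach {A u v} (h : G.reach A u v) : compOf G A u = compOf G A v := by
  ext w
  simp only [compOf, mem_filter, and_congr_right_iff]
  exact fun _ => ⟨fun hw => (reach_symm G h).trans hw, fun hw => h.trans hw⟩

lemma mem_compOf_self {A v} (hv : v ∈ G.verts) : v ∈ compOf G A v :=
  Finset.mem_filter.2 ⟨hv, Relation.ReflTransGen.refl⟩

lemma compOf_mem_components {A v} (hv : v ∈ G.verts) : compOf G A v ∈ G.components A :=
  Finset.mem_image.2 ⟨v, hv, rfl⟩

lemma reach_of_mem_compOf {A u v} (hv : v ∈ compOf G A u) : G.reach A u v :=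
  (Finset.mem_filter.1 hv).2

lemma mem_verts_of_mem_compOf {A u v} (hv : v ∈ compOf G A u) : v ∈ G.verts :=
  (Finset.mem_filter.1 hv).1

lemma compOf_eq_of_mem {A C v} (hC : C ∈ G.components A) (hv : v ∈ C) :
    compOf G A v = C := by
  obtain ⟨u, _, rfl⟩ := Finset.mem_image.1 hC
  exact (compOf_eq_of_reach G (reach_of_mem_compOf G hv)).symm

lemma components_nonempty {A C} (hC : C ∈ G.components A) : C.Nonempty := by
  obtain ⟨u, hu, rfl⟩ := Finset.mem_image.1 hC
  exact ⟨u, mem_compOf_self G hu⟩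

lemma components_subset {A C} (hC : C ∈ G.components A) : C ⊆ G.verts := by
  obtain ⟨u, _, rfl⟩ := Finset.mem_image.1 hC
  exact Finset.filter_subset _ _

lemma components_pairwiseDisjoint (A : Finset ℕ) :
    (↑(G.components A) : Set (Finset ℕ)).PairwiseDisjoint id := by
  intro C hC D hD hne
  simp only [Function.onFun, id]
  rw [Finset.disjoint_left]
  intro w hwC hwD
  exact hne ((compOf_eq_of_mem G hC hwC).symm.trans (compOf_eq_of_mem G hD hwD))

lemma components_biUnion (A : Finset ℕ) : (G.components A).biUnion id = G.verts := by
  ext v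
  simp only [Finset.mem_biUnion, id]
  constructor
  · rintro ⟨C, hC, hv⟩; exact components_subset G hC hv
  · intro hv; exact ⟨compOf G A v, compOf_mem_components G hv, mem_compOf_self G hv⟩

lemma sum_components {M : Type*} [AddCommMonoid M] (A : Finset ℕ) (f : ℕ → M) :
    ∑ C ∈ G.components A, ∑ v ∈ C, f v = ∑ v ∈ G.verts, f v := by
  rw [← components_biUnion G A, Finset.sum_biUnion (components_pairwiseDisjoint G A)]
  rfl

/-- The finset of all `k`-colourings. -/
noncomputable def colF (G : WGraph) (k : ℕ) : Finset (ℕ → ℕ) :=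
  (G.verts.pi (fun _ => Finset.range k)).image
    (fun f v => if h : v ∈ G.verts then f v h else 0)

lemma mem_colF {k s} : s ∈ colF G k ↔ s ∈ G.allCol k := by
  constructor
  · rintro hs
    obtain ⟨f, hf, rfl⟩ := Finset.mem_image.1 hs
    rw [Finset.mem_pi] at hf
    constructor
    · intro v hv
      simpa [dif_pos hv] using Finset.mem_range.1 (hf v hv)
    · intro v hv; simp [dif_neg hv]
  · rintro ⟨h1, h2⟩
    refine Finset.mem_image.2 ⟨fun v _ => s v, ?_, ?_⟩
    · rw [Finset.mem_pi]; exact fun v hv => Finset.mem_range.2 (h1 v hv)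
    · funext v
      by_cases hv : v ∈ G.verts
      · simp [dif_pos hv]
      · simp [dif_neg hv, h2 v hv]

lemma eq_of_reach {A u v} {s : ℕ → ℕ}
    (hs : ∀ e ∈ A, ∀ a b, G.ends e = s(a, b) → s a = s b) (h : G.reach A u v) :
    s u = s v := by
  induction h with
  | refl => rfl
  | tail _ hbc ih =>
    obtain ⟨i, hi, he⟩ := hbc
    exact ih.trans (hs i hi _ _ he)

lemma rpow_fin_sum {r : ℝ} (hr : 0 < r) {α : Type*} (s : Finset α) (f : α → ℝ) :
    r ^ (∑ i ∈ s, f i) = ∏ i ∈ s, r ^ (f i) := by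
  induction s using Finset.cons_induction with
  | empty => simp
  | cons a s ha ih => rw [Finset.sum_cons, Finset.prod_cons, Real.rpow_add hr, ih]

lemma not_mono_iff (e : ℕ) (s : ℕ → ℕ) :
    ¬(∀ a b, G.ends e = s(a, b) → s a = s b) ↔
      (∀ a b, G.ends e = s(a, b) → s a ≠ s b) := by
  constructor
  · intro h a b hab hs
    apply h
    intro a' b' hab'
    rw [hab, Sym2.eq_iff] at hab'
    rcases hab' with ⟨rfl, rfl⟩ | ⟨rfl, rfl⟩
    · exact hs
    · exact hs.symm
  · intro h hm
    obtain ⟨a, b, hab⟩ : ∃ a b, G.ends e = s(a, b) :=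
      Sym2.ind (fun x y => ⟨x, y, rfl⟩) (G.ends e)
    exact h a b hab (hm a b hab)

lemma prod_components (r q : ℝ) (hr : 0 < r) (k : ℕ) {A : Finset ℕ} (hA : A ⊆ G.edges) :
    ∏ C ∈ G.components A, ∑ i ∈ Finset.range k, r ^ ((G.wt C : ℝ) * q ^ i)
      = ∑ s ∈ (colF G k).filter
          (fun s => ∀ e ∈ A, ∀ a b, G.ends e = s(a, b) → s a = s b),
          r ^ (∑ v ∈ G.verts, (G.w v : ℝ) * q ^ (s v)) := by
  rw [Finset.prod_sum]
  have paux : ∀ (p : ∀ C ∈ G.components A, ℕ) (C D : Finset ℕ)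
      (h1 : C ∈ G.components A) (h2 : D ∈ G.components A), C = D → p C h1 = p D h2 := by
    rintro p C D h1 h2 rfl; rfl
  refine Finset.sum_bij'
    (i := fun p _ => fun v =>
      if h : v ∈ G.verts then p (compOf G A v) (compOf_mem_components G h) else 0)
    (j := fun s _ => fun C hC => s (C.min' (components_nonempty G hC)))
    ?_ ?_ ?_ ?_ ?_
  · -- hi : maps into the filter
    intro p hp
    rw [Finset.mem_pi] at hp
    rw [Finset.mem_filter]
    refine ⟨(mem_colF G).2 ⟨?_, ?_⟩, ?_⟩
    · intro v hv
      simpa [dif_pos hv] using Finset.mem_range.1 (hp _ (compOf_mem_components G hv))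
    · intro v hv; simp [dif_neg hv]
    · intro e he a b hab
      have hev : e ∈ G.edges := hA he
      have ha : a ∈ G.verts := G.ends_mem e hev a (by rw [hab]; exact Sym2.mem_mk_left a b)
      have hb : b ∈ G.verts := G.ends_mem e hev b (by rw [hab]; exact Sym2.mem_mk_right a b)
      have hre : G.reach A a b := Relation.ReflTransGen.single ⟨e, he, hab⟩
      have hcc : compOf G A a = compOf G A b := compOf_eq_of_reach G hre
      simp only [dif_pos ha, dif_pos hb]
      exact paux p _ _ _ _ hcc
  · -- hj : maps into pi
    intro s hs
    rw [Finset.mem_filter] at hs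
    have hcol := (mem_colF G).1 hs.1
    rw [Finset.mem_pi]
    intro C hC
    exact Finset.mem_range.2
      (hcol.1 _ (components_subset G hC (Finset.min'_mem _ (components_nonempty G hC))))
  · -- left_inv
    intro p hp
    funext C hC
    have hm : C.min' (components_nonempty G hC) ∈ C := Finset.min'_mem _ _
    have hv : C.min' (components_nonempty G hC) ∈ G.verts := components_subset G hC hm
    simp only [dif_pos hv]
    exact paux p _ _ _ _ (compOf_eq_of_mem G hC hm)
  · -- right_inv
    intro s hs
    rw [Finset.mem_filter] at hs
    have hcol := (mem_colF G).1 hs.1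
    funext v
    by_cases hv : v ∈ G.verts
    · simp only [dif_pos hv]
      have hm : (compOf G A v).min' (components_nonempty G (compOf_mem_components G hv))
          ∈ compOf G A v := Finset.min'_mem _ _
      exact (eq_of_reach G hs.2 (reach_of_mem_compOf G hm)).symm
    · simp only [dif_neg hv]
      exact (hcol.2 v hv).symm
  · -- values agree
    intro p hp
    rw [← rpow_fin_sum hr]
    congr 1
    rw [← sum_components G A, ← Finset.sum_attach (G.components A)
      (fun C => ∑ v ∈ C, (G.w v : ℝ) *
        q ^ (if h : v ∈ G.verts then p (compOf G A v) (compOf_mem_components G h) else 0))]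
    refine Finset.sum_congr rfl ?_
    rintro ⟨C, hC⟩ -
    have key : ∀ v ∈ C,
        (if h : v ∈ G.verts then p (compOf G A v) (compOf_mem_components G h) else 0)
          = p C hC := by
      intro v hv
      have hv' : v ∈ G.verts := components_subset G hC hv
      rw [dif_pos hv']
      exact paux p _ _ _ _ (compOf_eq_of_mem G hC hv)
    calc (G.wt C : ℝ) * q ^ (p C hC)
        = ∑ v ∈ C, (G.w v : ℝ) * q ^ (p C hC) := by
          rw [← Finset.sum_mul]
          congr 1
          simp [WGraph.wt]
      _ = ∑ v ∈ C, (G.w v : ℝ) * q ^ (if h : v ∈ G.verts then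
            p (compOf G A v) (compOf_mem_components G h) else 0) := by
          exact Finset.sum_congr rfl fun v hv => by rw [key v hv]

end WGraphAux

/-- Spanning-subgraph expansion of the weighted `(r,q)`-chromatic function:
`M^ω_{r,q}(G;k) = ∑_{A ⊆ E} (−1)^{|A|} ∏_{C ∈ com(A)} ∑_{i=0}^{k−1} r^{ω(C) q^i}`. -/
theorem Mw_subgraph_expansion (G : WGraph) (r q : ℝ) (hr : 0 < r) (k : ℕ) :
    G.Mw r q k =
      ∑ A ∈ G.edges.powerset, (-1 : ℝ) ^ A.card *
        ∏ C ∈ G.components A, ∑ i ∈ Finset.range k, r ^ ((G.wt C : ℝ) * q ^ i) := by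
  classical
  open WGraphAux in
  set f : (ℕ → ℕ) → ℝ := fun s => r ^ (∑ v ∈ G.verts, (G.w v : ℝ) * q ^ (s v)) with hf
  -- rewrite the RHS using the component-product expansion
  have hrhs : ∀ A ∈ G.edges.powerset,
      (-1 : ℝ) ^ A.card *
          ∏ C ∈ G.components A, ∑ i ∈ Finset.range k, r ^ ((G.wt C : ℝ) * q ^ i)
        = ∑ s ∈ colF G k,
            if (∀ e ∈ A, ∀ a b, G.ends e = s(a, b) → s a = s b)
            then (-1 : ℝ) ^ A.card * f s else 0 := by
    intro A hA
    rw [WGraphAux.prod_components G r q hr k (Finset.mem_powerset.1 hA), Finset.mul_sum,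
      Finset.sum_filter]
  rw [Finset.sum_congr rfl hrhs, Finset.sum_comm]
  -- inner inclusion–exclusion for each colouring
  have hinner : ∀ s ∈ colF G k,
      (∑ A ∈ G.edges.powerset,
          if (∀ e ∈ A, ∀ a b, G.ends e = s(a, b) → s a = s b)
          then (-1 : ℝ) ^ A.card * f s else 0)
        = if (∀ e ∈ G.edges, ∀ a b, G.ends e = s(a, b) → s a ≠ s b) then f s else 0 := by
    intro s _
    set M : Finset ℕ := G.edges.filter
      (fun e => ∀ a b, G.ends e = s(a, b) → s a = s b) with hM
    have h1 : ∀ A ∈ G.edges.powerset,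
        (if (∀ e ∈ A, ∀ a b, G.ends e = s(a, b) → s a = s b)
          then (-1 : ℝ) ^ A.card * f s else 0)
          = if A ⊆ M then (-1 : ℝ) ^ A.card * f s else 0 := by
      intro A hA
      refine if_congr ?_ rfl rfl
      rw [Finset.mem_powerset] at hA
      constructor
      · intro h e he
        exact Finset.mem_filter.2 ⟨hA he, h e he⟩
      · intro h e he
        exact (Finset.mem_filter.1 (h he)).2
    rw [Finset.sum_congr rfl h1, ← Finset.sum_filter]
    have h2 : G.edges.powerset.filter (fun A => A ⊆ M) = M.powerset := by
      ext A
      simp only [Finset.mem_filter, Finset.mem_powerset]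
      exact ⟨fun h => h.2, fun h => ⟨h.trans (Finset.filter_subset _ _), h⟩⟩
    rw [h2, ← Finset.sum_mul]
    have h3 : (∑ A ∈ M.powerset, (-1 : ℝ) ^ A.card)
        = if M = ∅ then 1 else 0 := by
      have := congrArg (fun z : ℤ => (z : ℝ)) (Finset.sum_powerset_neg_one_pow_card (x := M))
      push_cast at this
      simpa using this
    rw [h3]
    have h4 : (M = ∅) ↔ (∀ e ∈ G.edges, ∀ a b, G.ends e = s(a, b) → s a ≠ s b) := by
      rw [hM, Finset.filter_eq_empty_iff]
      exact forall₂_congr fun e _ => WGraphAux.not_mono_iff G e s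
    split
    · rename_i h; rw [if_pos (h4.1 h), one_mul]
    · rename_i h; rw [if_neg (fun hc => h (h4.2 hc)), zero_mul]
  rw [Finset.sum_congr rfl hinner, ← Finset.sum_filter]
  -- identify with the finsum over proper colourings
  have hset : G.properCol k
      = ↑((colF G k).filter
          (fun s => ∀ e ∈ G.edges, ∀ a b, G.ends e = s(a, b) → s a ≠ s b)) := by
    ext s
    simp only [WGraph.properCol, Set.mem_setOf_eq, Finset.coe_filter,
      ← WGraphAux.mem_colF G]
  rw [WGraph.Mw, hset, finsum_mem_coe_finset]
end

section
/- For a vertex-weighted graph G with weight function ω and a non-loop edge e, B^ω_{r,q}(G;x,k) = B^ω_{r,q}(G−e;x,k) + x·B^ω_{r,q}(G/e;x,k); and if e is a loop, B^ω_{r,q}(G;x,k) = (x+1)·B^ω_{r,q}(G−e;x,k). -/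
open scoped Classical

open WGraph

namespace WGraph

lemma adj_symm (G : WGraph) {A : Finset ℕ} {u v : ℕ} (h : G.adj A u v) : G.adj A v u := by
  obtain ⟨i, hi, he⟩ := h
  exact ⟨i, hi, he.trans Sym2.eq_swap⟩

lemma reach_symm (G : WGraph) {A : Finset ℕ} {u v : ℕ} (h : G.reach A u v) : G.reach A v u :=
  (@Relation.ReflTransGen.stdSymm _ _ ⟨fun _ _ h => G.adj_symm h⟩).symm _ _ h

lemma adj_reach (G : WGraph) {A : Finset ℕ} {u v : ℕ} (h : G.adj A u v) : G.reach A u v :=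
  Relation.ReflTransGen.single h

lemma filter_reach_eq (G : WGraph) {A : Finset ℕ} {u v : ℕ} (h : G.reach A u v) :
    G.verts.filter (G.reach A u) = G.verts.filter (G.reach A v) := by
  ext w
  simp only [Finset.mem_filter, and_congr_right_iff]
  intro _
  exact ⟨fun hw => Relation.ReflTransGen.trans (G.reach_symm h) hw,
    fun hw => Relation.ReflTransGen.trans h hw⟩

/-- The delete graph's `Bw` as a sum over the original graph's data. -/
lemma Bw_delete_eq (G : WGraph) (r q x : ℝ) (k : ℕ) (e : ℕ) :
    (G.delete e).Bw r q x k =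
      ∑ A ∈ (G.edges.erase e).powerset, x ^ A.card *
        ∏ C ∈ G.components A, ∑ i ∈ Finset.range k, r ^ ((G.wt C : ℝ) * q ^ i) := rfl

section Loop

variable {G : WGraph} {e a : ℕ} (he : e ∈ G.edges) (hends : G.ends e = s(a, a))

include hends

lemma loop_reach_eq (A : Finset ℕ) : G.reach (insert e A) = G.reach A := by
  funext u v
  apply propext
  constructor
  · intro h
    induction h with
    | refl => exact Relation.ReflTransGen.refl
    | tail _ hadj ih =>
      obtain ⟨i, hi, hie⟩ := hadj
      rcases Finset.mem_insert.1 hi with rfl | hi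
      · rw [hends] at hie
        rcases Sym2.eq_iff.1 hie with ⟨h1, h2⟩ | ⟨h1, h2⟩
        · exact (h1.symm.trans h2) ▸ ih
        · exact (h2.symm.trans h1) ▸ ih
      · exact ih.tail ⟨i, hi, hie⟩
  · intro h
    exact Relation.ReflTransGen.mono (r := G.adj A) (p := G.adj (insert e A))
      (fun p q' ⟨i, hi, hie⟩ => ⟨i, Finset.mem_insert_of_mem hi, hie⟩) _ _ h

lemma loop_components_eq (A : Finset ℕ) :
    G.components (insert e A) = G.components A := by
  unfold components
  rw [loop_reach_eq hends A]

end Loop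

section Contract

variable {G : WGraph} {e a b : ℕ} (he : e ∈ G.edges) (hab : a ≠ b)
  (hends : G.ends e = s(a, b)) (A : Finset ℕ)

include he hab hends

/-- The projection map for contraction. -/
def cproj (a b v : ℕ) : ℕ := if v = b then a else v

lemma ha_mem : a ∈ G.verts :=
  G.ends_mem e he a (by rw [hends]; exact Sym2.mem_mk_left a b)

lemma hb_mem : b ∈ G.verts :=
  G.ends_mem e he b (by rw [hends]; exact Sym2.mem_mk_right a b)

lemma reach_e_ab : G.reach (insert e A) a b :=
  G.adj_reach ⟨e, Finset.mem_insert_self e A, hends⟩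

lemma reach_cproj (p : ℕ) : G.reach (insert e A) (cproj a b p) p := by
  unfold cproj
  split
  · next h => subst h; exact reach_e_ab he hab hends A
  · exact Relation.ReflTransGen.refl

lemma reach_contract_of_reach {u v : ℕ} (h : G.reach (insert e A) u v) :
    (G.contract e a b).reach A (cproj a b u) (cproj a b v) := by
  induction h with
  | refl => exact Relation.ReflTransGen.refl
  | @tail w z _ hadj ih =>
    obtain ⟨i, hi, hie⟩ := hadj
    rcases Finset.mem_insert.1 hi with rfl | hi
    · rw [hends] at hie
      have hcc : cproj a b w = cproj a b z := by
        rcases Sym2.eq_iff.1 hie with ⟨rfl, rfl⟩ | ⟨rfl, rfl⟩ <;> simp [cproj, hab]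
      rw [← hcc]; exact ih
    · refine ih.tail ⟨i, hi, ?_⟩
      show Sym2.map _ (G.ends i) = _
      rw [hie, Sym2.map_pair_eq]
      rfl

lemma reach_of_reach_contract {u v : ℕ} (h : (G.contract e a b).reach A u v)
    (hA : A ⊆ G.edges.erase e) : G.reach (insert e A) u v := by
  induction h with
  | refl => exact Relation.ReflTransGen.refl
  | @tail w z _ hadj ih =>
    obtain ⟨i, hi, hie⟩ := hadj
    obtain ⟨p, p', hpp⟩ : ∃ p p', G.ends i = s(p, p') :=
      Sym2.ind (f := fun s => ∃ p p', s = s(p, p')) (fun p p' => ⟨p, p', rfl⟩) (G.ends i)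
    have hie' : s(cproj a b p, cproj a b p') = s(w, z) := by
      rw [← Sym2.map_pair_eq, ← hpp]; exact hie
    have hstep : G.reach (insert e A) (cproj a b p) (cproj a b p') := by
      refine Relation.ReflTransGen.trans (reach_cproj he hab hends A p) ?_
      refine Relation.ReflTransGen.trans
        (G.adj_reach ⟨i, Finset.mem_insert_of_mem hi, hpp⟩) ?_
      exact G.reach_symm (reach_cproj he hab hends A p')
    rcases Sym2.eq_iff.1 hie' with ⟨h1, h2⟩ | ⟨h1, h2⟩
    · rw [h1, h2] at hstep; exact ih.trans hstep
    · rw [h1, h2] at hstep; exact ih.trans (G.reach_symm hstep)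

lemma cproj_eq_self {v : ℕ} (hv : v ≠ b) : cproj a b v = v := if_neg hv

lemma reach_contract_iff {u v : ℕ} (hu : u ≠ b) (hv : v ≠ b) (hA : A ⊆ G.edges.erase e) :
    (G.contract e a b).reach A u v ↔ G.reach (insert e A) u v := by
  constructor
  · intro h; exact reach_of_reach_contract he hab hends A h hA
  · intro h
    have := reach_contract_of_reach he hab hends A h
    rwa [cproj_eq_self he hab hends hu, cproj_eq_self he hab hends hv] at this

lemma mem_contract_verts {u : ℕ} :
    u ∈ (G.contract e a b).verts ↔ u ∈ G.verts ∧ u ≠ b := by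
  show u ∈ insert a (G.verts.erase b) ↔ _
  simp only [Finset.mem_insert, Finset.mem_erase]
  constructor
  · rintro (rfl | ⟨h1, h2⟩)
    · exact ⟨ha_mem he hab hends, hab⟩
    · exact ⟨h2, h1⟩
  · rintro ⟨h1, h2⟩; exact Or.inr ⟨h2, h1⟩

lemma contract_filter_eq {v : ℕ} (hv : v ≠ b) (hA : A ⊆ G.edges.erase e) :
    (G.contract e a b).verts.filter ((G.contract e a b).reach A v) =
      (G.verts.filter (G.reach (insert e A) v)).erase b := by
  ext u
  simp only [Finset.mem_filter, Finset.mem_erase, mem_contract_verts he hab hends]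
  constructor
  · rintro ⟨⟨h1, h2⟩, h3⟩
    exact ⟨h2, h1, (reach_contract_iff he hab hends A hv h2 hA).1 h3⟩
  · rintro ⟨h1, h2, h3⟩
    exact ⟨⟨h2, h1⟩, (reach_contract_iff he hab hends A hv h1 hA).2 h3⟩

lemma contract_components_eq (hA : A ⊆ G.edges.erase e) :
    (G.contract e a b).components A =
      (G.components (insert e A)).image (fun C => C.erase b) := by
  ext C
  simp only [components, Finset.mem_image, mem_contract_verts he hab hends]
  constructor
  · rintro ⟨v, ⟨hv, hvb⟩, rfl⟩
    exact ⟨G.verts.filter (G.reach (insert e A) v), ⟨v, hv, rfl⟩,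
      (contract_filter_eq he hab hends A hvb hA).symm⟩
  · rintro ⟨D, ⟨v, hv, rfl⟩, rfl⟩
    by_cases hvb : v = b
    · subst hvb
      refine ⟨a, ⟨ha_mem he hab hends, hab⟩, ?_⟩
      rw [contract_filter_eq he hab hends A hab hA,
        G.filter_reach_eq (G.reach_symm (reach_e_ab he hab hends A))]
    · exact ⟨v, ⟨hv, hvb⟩, contract_filter_eq he hab hends A hvb hA⟩

lemma comp_rep {C : Finset ℕ} (hC : C ∈ G.components (insert e A)) :
    ∃ v ∈ G.verts, C = G.verts.filter (G.reach (insert e A) v) := by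
  obtain ⟨v, hv, h⟩ := Finset.mem_image.1 hC
  exact ⟨v, hv, h.symm⟩

lemma b_mem_imp_a_mem {C : Finset ℕ} (hC : C ∈ G.components (insert e A)) (hb : b ∈ C) :
    a ∈ C := by
  obtain ⟨v, hv, rfl⟩ := comp_rep he hab hends A hC
  rw [Finset.mem_filter] at hb ⊢
  exact ⟨ha_mem he hab hends, hb.2.trans (G.reach_symm (reach_e_ab he hab hends A))⟩

lemma a_mem_imp_b_mem {C : Finset ℕ} (hC : C ∈ G.components (insert e A)) (hb : a ∈ C) :
    b ∈ C := by
  obtain ⟨v, hv, rfl⟩ := comp_rep he hab hends A hC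
  rw [Finset.mem_filter] at hb ⊢
  exact ⟨hb_mem he hab hends, hb.2.trans (reach_e_ab he hab hends A)⟩

lemma erase_b_injOn : Set.InjOn (fun C => Finset.erase C b)
    ↑(G.components (insert e A)) := by
  intro C hC D hD hCD
  obtain ⟨v, hv, rfl⟩ := comp_rep he hab hends A (hC : _ ∈ G.components _)
  obtain ⟨w, hw, rfl⟩ := comp_rep he hab hends A (hD : _ ∈ G.components _)
  simp only at hCD
  have hne : ∃ u, u ∈ (G.verts.filter (G.reach (insert e A) v)).erase b := by
    by_cases hvb : v = b
    · subst hvb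
      exact ⟨a, Finset.mem_erase.2 ⟨hab, Finset.mem_filter.2
        ⟨ha_mem he hab hends, G.reach_symm (reach_e_ab he hab hends A)⟩⟩⟩
    · exact ⟨v, Finset.mem_erase.2 ⟨hvb, Finset.mem_filter.2 ⟨hv, Relation.ReflTransGen.refl⟩⟩⟩
  obtain ⟨u, hu⟩ := hne
  have hu2 := hu
  rw [hCD] at hu2
  have h1 := (Finset.mem_filter.1 (Finset.mem_of_mem_erase hu)).2
  have h2 := (Finset.mem_filter.1 (Finset.mem_of_mem_erase hu2)).2
  exact G.filter_reach_eq (h1.trans (G.reach_symm h2))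

lemma contract_wt_eq {C : Finset ℕ} (hC : C ∈ G.components (insert e A)) :
    (G.contract e a b).wt (C.erase b) = G.wt C := by
  unfold wt
  by_cases hb : b ∈ C
  · have hac : a ∈ C := b_mem_imp_a_mem he hab hends A hC hb
    have haeb : a ∈ C.erase b := Finset.mem_erase.2 ⟨hab, hac⟩
    rw [← Finset.add_sum_erase _ _ haeb, ← Finset.add_sum_erase _ _ hb,
      ← Finset.add_sum_erase _ (G.w) (Finset.mem_erase.2 ⟨hab, hac⟩)]
    have : ((G.contract e a b).w a) = G.w a + G.w b := if_pos rfl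
    rw [this]
    have hsum : ∑ u ∈ (C.erase b).erase a, (G.contract e a b).w u =
        ∑ u ∈ (C.erase b).erase a, G.w u := by
      refine Finset.sum_congr rfl fun u hu => ?_
      exact if_neg (Finset.mem_erase.1 hu).1
    rw [hsum]; ring
  · have hac : a ∉ C := fun hac => hb (a_mem_imp_b_mem he hab hends A hC hac)
    rw [Finset.erase_eq_of_notMem hb]
    refine Finset.sum_congr rfl fun u hu => ?_
    exact if_neg (fun h : u = a => hac (h ▸ hu))

end Contract

end WGraph

/-- Deletion–contraction for the weighted `(r,q)`-dichromatic function: for a non-loop edge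
`e = ab`, `B^ω_{r,q}(G;x,k) = B^ω_{r,q}(G−e;x,k) + x·B^ω_{r,q}(G/e;x,k)`, and for a loop
`e` (at a vertex `a`), `B^ω_{r,q}(G;x,k) = (x+1)·B^ω_{r,q}(G−e;x,k)`. -/
theorem Bw_deletion_contraction (G : WGraph) (r q x : ℝ) (hr : 0 < r) (k : ℕ) :
    (∀ e a b : ℕ, e ∈ G.edges → a ≠ b → G.ends e = s(a, b) →
      G.Bw r q x k = (G.delete e).Bw r q x k + x * (G.contract e a b).Bw r q x k) ∧
    (∀ e a : ℕ, e ∈ G.edges → G.ends e = s(a, a) →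
      G.Bw r q x k = (x + 1) * (G.delete e).Bw r q x k) := by
  constructor
  · intro e a b he hab hends
    rw [WGraph.Bw_delete_eq]
    conv_lhs =>
      unfold WGraph.Bw
      rw [← Finset.insert_erase he,
        Finset.sum_powerset_insert (Finset.notMem_erase e G.edges)]
    congr 1
    unfold WGraph.Bw
    rw [show (G.contract e a b).edges = G.edges.erase e from rfl, Finset.mul_sum]
    refine Finset.sum_congr rfl fun A hA => ?_
    have hA' := Finset.mem_powerset.1 hA
    have heA : e ∉ A := fun h => Finset.notMem_erase e G.edges (hA' h)
    rw [Finset.card_insert_of_notMem heA, pow_succ]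
    rw [WGraph.contract_components_eq he hab hends A hA',
      Finset.prod_image (fun C hC D hD h =>
        WGraph.erase_b_injOn he hab hends A hC hD h)]
    have hprod : ∀ C ∈ G.components (insert e A),
        (∑ i ∈ Finset.range k, r ^ (((G.contract e a b).wt (C.erase b) : ℝ) * q ^ i)) =
        ∑ i ∈ Finset.range k, r ^ ((G.wt C : ℝ) * q ^ i) := by
      intro C hC
      rw [WGraph.contract_wt_eq he hab hends A hC]
    rw [Finset.prod_congr rfl hprod]
    ring
  · intro e a he hends
    rw [WGraph.Bw_delete_eq]
    conv_lhs =>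
      unfold WGraph.Bw
      rw [← Finset.insert_erase he,
        Finset.sum_powerset_insert (Finset.notMem_erase e G.edges)]
    have h2 : ∀ A ∈ (G.edges.erase e).powerset,
        x ^ (insert e A).card *
          ∏ C ∈ G.components (insert e A), ∑ i ∈ Finset.range k, r ^ ((G.wt C : ℝ) * q ^ i) =
        x * (x ^ A.card *
          ∏ C ∈ G.components A, ∑ i ∈ Finset.range k, r ^ ((G.wt C : ℝ) * q ^ i)) := by
      intro A hA
      have heA : e ∉ A := fun h => Finset.notMem_erase e G.edges (Finset.mem_powerset.1 hA h)
      rw [Finset.card_insert_of_notMem heA, pow_succ,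
        WGraph.loop_components_eq hends A]
      ring
    rw [Finset.sum_congr rfl h2, ← Finset.mul_sum]
    ring
end

section
/- Let r > 1 be real, k, b ∈ ℕ, and let G be a graph on |V| vertices. The coefficient of t^b in B_{r,q}(G; t−1, k), viewed as a function of q, can be uniquely written in the form ∑_c a_c · r^{∑_i c_i q^i}, where the sum is over vectors c = (c_0,...,c_{k−1}) of non-negative integers with ∑_i c_i = |V|, and a_c ∈ ℕ. Equivalently: if S is a non-empty finite set of such vectors and a_c are non-zero integers for c ∈ S, then the function F(q) = ∑_{c∈S} a_c·r^{∑_i c_i q^i} of a real variable q is not identically zero. -/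
open Finset

lemma gap_lemma (n k : ℕ) (c c' : ℕ → ℕ) (j : ℕ) (hj1 : 1 ≤ j) (hjk : j < k)
    (hsum' : ∑ i ∈ Finset.range k, c' i ≤ n)
    (hlt : c' j < c j) (htop : ∀ i, j < i → c i = c' i)
    (q : ℝ) (hq : (n : ℝ) + 2 ≤ q) :
    q - 1 - n ≤ (∑ i ∈ Finset.range k, (c i : ℝ) * q ^ i)
      - ∑ i ∈ Finset.range k, (c' i : ℝ) * q ^ i := by
  have hn0 : (0:ℝ) ≤ n := Nat.cast_nonneg n
  have hq1 : (1:ℝ) ≤ q := by linarith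
  have hq0 : (0:ℝ) ≤ q := by linarith
  obtain ⟨m, rfl⟩ : ∃ m, j = m + 1 := ⟨j - 1, (Nat.succ_pred_eq_of_pos hj1).symm⟩
  have hsplit : ∀ d : ℕ → ℕ, ∑ i ∈ Finset.range k, (d i : ℝ) * q ^ i
      = (∑ i ∈ Finset.range (m+1), (d i : ℝ) * q ^ i) + (d (m+1) : ℝ) * q ^ (m+1)
        + ∑ i ∈ Finset.Ico (m+2) k, (d i : ℝ) * q ^ i := by
    intro d
    rw [← Finset.sum_range_add_sum_Ico _ (show m + 2 ≤ k from hjk), Finset.sum_range_succ]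
  rw [hsplit c, hsplit c']
  have htail : ∑ i ∈ Finset.Ico (m+2) k, (c i : ℝ) * q ^ i
      = ∑ i ∈ Finset.Ico (m+2) k, (c' i : ℝ) * q ^ i := by
    refine Finset.sum_congr rfl fun i hi => ?_
    have hi' := Finset.mem_Ico.mp hi
    rw [htop i (by omega)]
  have hA : (0:ℝ) ≤ ∑ i ∈ Finset.range (m+1), (c i : ℝ) * q ^ i := by
    refine Finset.sum_nonneg fun i _ => ?_
    positivity
  have hB : ∑ i ∈ Finset.range (m+1), (c' i : ℝ) * q ^ i ≤ (n : ℝ) * q ^ m := by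
    calc ∑ i ∈ Finset.range (m+1), (c' i : ℝ) * q ^ i
        ≤ ∑ i ∈ Finset.range (m+1), (c' i : ℝ) * q ^ m := by
          refine Finset.sum_le_sum fun i hi => ?_
          have : q ^ i ≤ q ^ m := pow_le_pow_right₀ hq1 (by simp at hi; omega)
          have : (0:ℝ) ≤ (c' i : ℝ) := Nat.cast_nonneg _
          nlinarith
      _ = (∑ i ∈ Finset.range (m+1), (c' i : ℝ)) * q ^ m := by rw [Finset.sum_mul]
      _ ≤ (n : ℝ) * q ^ m := by
          have h1 : ∑ i ∈ Finset.range (m+1), (c' i : ℝ) ≤ (n : ℝ) := by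
            have h2 : ∑ i ∈ Finset.range (m+1), c' i ≤ n :=
              le_trans (Finset.sum_le_sum_of_subset (Finset.range_subset_range.2 (by omega))) hsum'
            exact_mod_cast le_trans (le_of_eq (Nat.cast_sum _ _).symm) (Nat.cast_le.2 h2)
          have hqm : (0:ℝ) ≤ q ^ m := by positivity
          nlinarith
  have hjq : (c' (m+1) : ℝ) + 1 ≤ (c (m+1) : ℝ) := by exact_mod_cast hlt
  have hqm1 : (1:ℝ) ≤ q ^ m := one_le_pow₀ hq1
  have key : q ^ m * (q - n) ≤ ((c (m+1) : ℝ) - c' (m+1)) * q ^ (m+1) - (n : ℝ) * q ^ m := by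
    have h1 : q ^ (m+1) = q ^ m * q := pow_succ q m
    have h2 : (1:ℝ) ≤ (c (m+1) : ℝ) - c' (m+1) := by linarith
    have hqm0 : (0:ℝ) ≤ q ^ m := by positivity
    have h3 : (0:ℝ) ≤ q ^ (m+1) := by positivity
    nlinarith [mul_le_mul_of_nonneg_right h2 h3]
  have final : q - 1 - n ≤ q ^ m * (q - n) := by nlinarith
  linarith

/-- extension of a vector `Fin k → ℕ` to `ℕ → ℕ` by zero. -/
def extv {k : ℕ} (c : Fin k → ℕ) : ℕ → ℕ := fun i => if h : i < k then c ⟨i, h⟩ else 0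

lemma sum_fin_eq_range {k : ℕ} (c : Fin k → ℕ) (q : ℝ) :
    ∑ i : Fin k, (c i : ℝ) * q ^ (i : ℕ) = ∑ i ∈ Finset.range k, (extv c i : ℝ) * q ^ i := by
  rw [← Fin.sum_univ_eq_sum_range (fun i => (extv c i : ℝ) * q ^ i) k]
  refine Finset.sum_congr rfl fun i _ => ?_
  simp [extv, i.2]

lemma sum_fin_eq_range_nat {k : ℕ} (c : Fin k → ℕ) :
    ∑ i : Fin k, c i = ∑ i ∈ Finset.range k, extv c i := by
  rw [← Fin.sum_univ_eq_sum_range (fun i => extv c i) k]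
  refine Finset.sum_congr rfl fun i _ => ?_
  simp [extv, i.2]

/-- Let `r > 1`. If `S` is a non-empty finite set of vectors `c = (c_0, …, c_{k−1})` of
non-negative integers with fixed sum `n`, and `a_c` are non-zero integers for `c ∈ S`, then
the function `F(q) = ∑_{c ∈ S} a_c · r^{∑_i c_i q^i}` of a real variable `q` is not
identically zero.  (This is the key content of the claim that the coefficient of `t^b` in
`B_{r,q}(G; t−1, k)` is uniquely expressible in the form `∑_c a_c r^{∑_i c_i q^i}` over
vectors `c` with `∑_i c_i = |V|`.) -/
theorem exp_polynomials_independent (r : ℝ) (hr : 1 < r) (k n : ℕ)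
    (S : Finset (Fin k → ℕ)) (hS : S.Nonempty) (hsum : ∀ c ∈ S, ∑ i, c i = n)
    (a : (Fin k → ℕ) → ℤ) (ha : ∀ c ∈ S, a c ≠ 0) :
    ∃ q : ℝ, ∑ c ∈ S, (a c : ℝ) * r ^ (∑ i : Fin k, (c i : ℝ) * q ^ (i : ℕ)) ≠ 0 := by
  have hr0 : (0:ℝ) < r := lt_trans zero_lt_one hr
  set P : (Fin k → ℕ) → ℝ → ℝ := fun c q => ∑ i : Fin k, (c i : ℝ) * q ^ (i : ℕ) with hP
  -- choose the maximizer at q = n + 2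
  obtain ⟨c0, hc0S, hmax⟩ := S.exists_max_image (fun c => P c ((n:ℝ) + 2)) hS
  -- key claim: uniform gap
  have key : ∀ c ∈ S, c ≠ c0 → ∀ q : ℝ, (n:ℝ) + 2 ≤ q → q - 1 - n ≤ P c0 q - P c q := by
    intro c hcS hne q hq
    -- top differing index
    have hne' : ∃ i, c0 i ≠ c i := by
      by_contra h
      push_neg at h
      exact hne (funext fun i => (h i).symm)
    obtain ⟨i0, hi0⟩ := hne'
    set T : Finset (Fin k) := Finset.univ.filter (fun i => c0 i ≠ c i) with hT
    have hTne : T.Nonempty := ⟨i0, by simp [hT, hi0]⟩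
    obtain ⟨j, hjT, hjmax⟩ := T.exists_max_image (fun i => i) hTne
    have hjne : c0 j ≠ c j := by simpa [hT] using hjT
    have htop : ∀ i : Fin k, j < i → c0 i = c i := by
      intro i hi
      by_contra h
      exact absurd (hjmax i (by simp [hT, h])) (not_le.mpr hi)
    -- j is positive since sums agree
    have hsum0 : ∑ i, c0 i = ∑ i, c i := by rw [hsum c0 hc0S, hsum c hcS]
    have hjpos : 1 ≤ (j : ℕ) := by
      by_contra h
      have hj0 : (j : ℕ) = 0 := by omega
      have heq : ∀ i ∈ Finset.univ.erase j, c0 i = c i := by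
        intro i hi
        have hij : i ≠ j := (Finset.mem_erase.mp hi).1
        refine htop i ?_
        have hvi : (i:ℕ) ≠ (j:ℕ) := fun h' => hij (Fin.ext h')
        exact Fin.lt_def.mpr (by omega)
      have h1 : ∑ i, c0 i = c0 j + ∑ i ∈ Finset.univ.erase j, c0 i :=
        (Finset.add_sum_erase _ _ (Finset.mem_univ j)).symm
      have h2 : ∑ i, c i = c j + ∑ i ∈ Finset.univ.erase j, c i :=
        (Finset.add_sum_erase _ _ (Finset.mem_univ j)).symm
      have h3 : ∑ i ∈ Finset.univ.erase j, c0 i = ∑ i ∈ Finset.univ.erase j, c i :=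
        Finset.sum_congr rfl heq
      exact hjne (by omega)
    -- extended versions
    have hsumc : ∑ i ∈ Finset.range k, extv c i ≤ n := by
      rw [← sum_fin_eq_range_nat, hsum c hcS]
    have hsumc0 : ∑ i ∈ Finset.range k, extv c0 i ≤ n := by
      rw [← sum_fin_eq_range_nat, hsum c0 hc0S]
    have hext : ∀ i : ℕ, (j:ℕ) < i → extv c0 i = extv c i := by
      intro i hi
      by_cases h : i < k
      · simp only [extv, dif_pos h]
        exact htop ⟨i, h⟩ hi
      · simp [extv, dif_neg h]
    rcases lt_or_gt_of_ne hjne with h | h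
    · -- c0 j < c j : contradiction with maximality at n+2
      exfalso
      have := gap_lemma n k (extv c) (extv c0) (j:ℕ) hjpos j.2 hsumc0
        (by simpa [extv, j.2] using h) (fun i hi => (hext i hi).symm)
        ((n:ℝ)+2) le_rfl
      have hle : (∑ i : Fin k, (c i : ℝ) * ((n:ℝ)+2) ^ (i:ℕ))
          ≤ ∑ i : Fin k, (c0 i : ℝ) * ((n:ℝ)+2) ^ (i:ℕ) := hmax c hcS
      rw [sum_fin_eq_range c, sum_fin_eq_range c0] at hle
      linarith
    · -- c j < c0 j : apply gap lemma
      have := gap_lemma n k (extv c0) (extv c) (j:ℕ) hjpos j.2 hsumc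
        (by simpa [extv, j.2] using h) hext q hq
      show q - 1 - (n:ℝ) ≤ (∑ i : Fin k, (c0 i : ℝ) * q ^ (i:ℕ))
          - ∑ i : Fin k, (c i : ℝ) * q ^ (i:ℕ)
      rw [sum_fin_eq_range c, sum_fin_eq_range c0]
      linarith
  -- choose q large
  set A : ℝ := ∑ c ∈ S, |(a c : ℝ)| with hA
  have hA1 : (1:ℝ) ≤ A := by
    have h1 : (1:ℝ) ≤ |(a c0 : ℝ)| := by
      have : (1:ℤ) ≤ |a c0| := Int.one_le_abs (ha c0 hc0S)
      calc (1:ℝ) ≤ |(a c0 : ℤ)| := by exact_mod_cast this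
        _ = |(a c0 : ℝ)| := by push_cast; rfl
    calc (1:ℝ) ≤ |(a c0 : ℝ)| := h1
      _ ≤ A := Finset.single_le_sum (f := fun c => |(a c : ℝ)|) (fun c _ => abs_nonneg _) hc0S
  have hA0 : (0:ℝ) < A := by linarith
  set q : ℝ := (n:ℝ) + 2 + Real.logb r A with hq
  have hlogb : (0:ℝ) ≤ Real.logb r A := Real.logb_nonneg hr hA1
  have hqge : (n:ℝ) + 2 ≤ q := by linarith
  refine ⟨q, ?_⟩
  -- the dominant term beats the rest
  have hgap : r ^ (q - 1 - (n:ℝ)) = r * A := by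
    have : q - 1 - (n:ℝ) = 1 + Real.logb r A := by rw [hq]; ring
    rw [this, Real.rpow_add hr0, Real.rpow_one, Real.rpow_logb hr0 (ne_of_gt hr) hA0]
  have hrA : A < r ^ (q - 1 - (n:ℝ)) := by
    rw [hgap]; nlinarith
  intro hzero
  -- split off the c0 term
  have hsplit : ∑ c ∈ S, (a c : ℝ) * r ^ (P c q)
      = (a c0 : ℝ) * r ^ (P c0 q) + ∑ c ∈ S.erase c0, (a c : ℝ) * r ^ (P c q) :=
    (Finset.add_sum_erase _ _ hc0S).symm
  rw [hP] at hsplit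
  simp only at hsplit
  rw [hsplit] at hzero
  have hmain : |(a c0 : ℝ)| * r ^ (P c0 q) = |∑ c ∈ S.erase c0, (a c : ℝ) * r ^ (P c q)| := by
    have h1 : (a c0 : ℝ) * r ^ (P c0 q) = -∑ c ∈ S.erase c0, (a c : ℝ) * r ^ (P c q) := by
      linarith
    rw [← abs_neg (∑ c ∈ S.erase c0, _), ← h1, abs_mul,
      abs_of_pos (Real.rpow_pos_of_pos hr0 _)]
  have hbound : |∑ c ∈ S.erase c0, (a c : ℝ) * r ^ (P c q)|
      ≤ A * (r ^ (P c0 q) / r ^ (q - 1 - (n:ℝ))) := by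
    calc |∑ c ∈ S.erase c0, (a c : ℝ) * r ^ (P c q)|
        ≤ ∑ c ∈ S.erase c0, |(a c : ℝ) * r ^ (P c q)| := Finset.abs_sum_le_sum_abs _ _
      _ ≤ ∑ c ∈ S.erase c0, |(a c : ℝ)| * (r ^ (P c0 q) / r ^ (q - 1 - (n:ℝ))) := by
          refine Finset.sum_le_sum fun c hc => ?_
          obtain ⟨hcne, hcS⟩ := Finset.mem_erase.mp hc
          have hgapc := key c hcS hcne q hqge
          have hle : P c q ≤ P c0 q - (q - 1 - (n:ℝ)) := by linarith
          have : r ^ (P c q) ≤ r ^ (P c0 q - (q - 1 - (n:ℝ))) :=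
            Real.rpow_le_rpow_of_exponent_le (le_of_lt hr) hle
          rw [abs_mul, abs_of_pos (Real.rpow_pos_of_pos hr0 _)]
          have h2 : r ^ (P c0 q - (q - 1 - (n:ℝ))) = r ^ (P c0 q) / r ^ (q - 1 - (n:ℝ)) :=
            Real.rpow_sub hr0 _ _
          have := abs_nonneg ((a c : ℝ))
          nlinarith
      _ ≤ A * (r ^ (P c0 q) / r ^ (q - 1 - (n:ℝ))) := by
          rw [← Finset.sum_mul]
          have hpos : (0:ℝ) ≤ r ^ (P c0 q) / r ^ (q - 1 - (n:ℝ)) := by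
            positivity
          have : ∑ c ∈ S.erase c0, |(a c : ℝ)| ≤ A := by
            rw [hA]
            exact Finset.sum_le_sum_of_subset_of_nonneg (Finset.erase_subset _ _)
              (fun c hc _ => abs_nonneg _)
          nlinarith
  -- contradiction
  have h1 : (1:ℝ) ≤ |(a c0 : ℝ)| := by
    have : (1:ℤ) ≤ |a c0| := Int.one_le_abs (ha c0 hc0S)
    calc (1:ℝ) ≤ |(a c0 : ℤ)| := by exact_mod_cast this
      _ = |(a c0 : ℝ)| := by push_cast; rfl
  have hP0 : (0:ℝ) < r ^ (P c0 q) := Real.rpow_pos_of_pos hr0 _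
  have hEexp : (0:ℝ) < r ^ (q - 1 - (n:ℝ)) := Real.rpow_pos_of_pos hr0 _
  have hstrict : A * (r ^ (P c0 q) / r ^ (q - 1 - (n:ℝ))) < r ^ (P c0 q) := by
    rw [div_eq_mul_inv]
    have hinv : (0:ℝ) < (r ^ (q - 1 - (n:ℝ)))⁻¹ := by positivity
    have : A * (r ^ (q - 1 - (n:ℝ)))⁻¹ < 1 := by
      rw [mul_inv_lt_iff₀ hEexp, one_mul]
      exact hrA
    nlinarith
  have : |(a c0 : ℝ)| * r ^ (P c0 q) ≥ r ^ (P c0 q) := by nlinarith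
  rw [hmain] at this
  linarith [lt_of_le_of_lt hbound hstrict]
end
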